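/- arXiv:1501.06084 — 7 statements merged into one kernel-verified Lean document; each statement's English description precedes it below -/
import Mathlib

section
/- Let λ, ξ, k, T > 0 be real numbers. There exists η ≥ 1 such that η²λξ²T² − 2η(1 + kT) + 2 ≤ 0 if and only if both (√(2λ)·ξ − k)·T ≤ 1 and, in addition, either 2λξ²T ≤ k + √(k² + 4λξ²), or k + √(k² + 4λξ²) < 2λξ²T ≤ 4k. -/
private lemma key_quad (a b : ℝ) (ha : 0 < a) :
    (∃ η : ℝ, 1 ≤ η ∧ η ^ 2 * a - 2 * η * b + 2 ≤ 0) ↔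
      (2 * a ≤ b ^ 2 ∧ (a ≤ b ∨ a ≤ 2 * b - 2)) := by
  constructor
  · rintro ⟨η, h1, h2⟩
    constructor
    · nlinarith [sq_nonneg (a * η - b), mul_nonpos_of_nonneg_of_nonpos ha.le h2]
    · by_contra h
      push_neg at h
      obtain ⟨hab, hab2⟩ := h
      nlinarith [mul_nonneg (sub_nonneg.2 h1) (sub_nonneg.2 h1),
        mul_nonneg (sub_nonneg.2 h1) (sub_pos.2 hab).le]
  · rintro ⟨hdisc, hcase⟩
    have hD : 0 ≤ b ^ 2 - 2 * a := by linarith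
    set s := Real.sqrt (b ^ 2 - 2 * a) with hs
    have hs2 : s ^ 2 = b ^ 2 - 2 * a := Real.sq_sqrt hD
    have hs0 : 0 ≤ s := Real.sqrt_nonneg _
    refine ⟨(b + s) / a, ?_, ?_⟩
    · rw [le_div_iff₀ ha, one_mul]
      rcases hcase with h | h
      · linarith
      · by_cases hab : a ≤ b
        · linarith
        · push_neg at hab
          nlinarith [mul_pos (sub_pos.2 hab) (by linarith : (0:ℝ) < s + (a - b))]
    · have : ((b + s) / a) ^ 2 * a - 2 * ((b + s) / a) * b + 2 = 0 := by
        field_simp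
        nlinarith [hs2]
      linarith

/-- Existence of `η ≥ 1` with `η²λξ²T² − 2η(1+kT) + 2 ≤ 0` is equivalent to the
explicit conditions on the parameters. -/
theorem stmt_1 (lam ξ k T : ℝ) (hlam : 0 < lam) (hξ : 0 < ξ) (hk : 0 < k) (hT : 0 < T) :
    (∃ η : ℝ, 1 ≤ η ∧ η ^ 2 * lam * ξ ^ 2 * T ^ 2 - 2 * η * (1 + k * T) + 2 ≤ 0)
      ↔ ((Real.sqrt (2 * lam) * ξ - k) * T ≤ 1 ∧
          (2 * lam * ξ ^ 2 * T ≤ k + Real.sqrt (k ^ 2 + 4 * lam * ξ ^ 2) ∨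
            (k + Real.sqrt (k ^ 2 + 4 * lam * ξ ^ 2) < 2 * lam * ξ ^ 2 * T ∧
              2 * lam * ξ ^ 2 * T ≤ 4 * k))) := by
  set a := lam * ξ ^ 2 * T ^ 2 with ha_def
  set b := 1 + k * T with hb_def
  have ha : 0 < a := by positivity
  have hb : 1 < b := by nlinarith
  -- condition 1 ↔ discriminant
  have hr : 0 ≤ k ^ 2 + 4 * lam * ξ ^ 2 := by positivity
  set r := Real.sqrt (k ^ 2 + 4 * lam * ξ ^ 2) with hr_def
  have hr2 : r ^ 2 = k ^ 2 + 4 * lam * ξ ^ 2 := Real.sq_sqrt hr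
  have hr0 : 0 ≤ r := Real.sqrt_nonneg _
  have c1 : (Real.sqrt (2 * lam) * ξ - k) * T ≤ 1 ↔ 2 * a ≤ b ^ 2 := by
    have hsq : Real.sqrt (2 * lam) * ξ * T = Real.sqrt (2 * a) := by
      rw [show 2 * a = (Real.sqrt (2 * lam) * ξ * T) ^ 2 by
        rw [mul_pow, mul_pow, Real.sq_sqrt (by linarith)]; ring]
      rw [Real.sqrt_sq (by positivity)]
    constructor
    · intro h
      have h' : Real.sqrt (2 * a) ≤ b := by
        rw [← hsq]; nlinarith
      nlinarith [Real.sq_sqrt (show (0:ℝ) ≤ 2 * a by positivity),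
        Real.sqrt_nonneg (2 * a)]
    · intro h
      have h' : Real.sqrt (2 * a) ≤ b := by
        rw [show b = Real.sqrt (b ^ 2) from (Real.sqrt_sq (by linarith)).symm]
        exact Real.sqrt_le_sqrt h
      rw [← hsq] at h'
      nlinarith
  have c2 : 2 * lam * ξ ^ 2 * T ≤ k + r ↔ a ≤ b := by
    constructor
    · intro h
      by_cases h0 : 2 * lam * ξ ^ 2 * T ≤ k
      · nlinarith
      · push_neg at h0
        have : (2 * lam * ξ ^ 2 * T - k) ^ 2 ≤ r ^ 2 := by nlinarith
        rw [hr2] at this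
        nlinarith [mul_pos (mul_pos hlam (by positivity : (0:ℝ) < ξ ^ 2)) hT]
    · intro h
      by_cases h0 : 2 * lam * ξ ^ 2 * T ≤ k
      · linarith
      · push_neg at h0
        have hx : 0 < 2 * lam * ξ ^ 2 * T - k := by linarith
        have : (2 * lam * ξ ^ 2 * T - k) ^ 2 ≤ r ^ 2 := by
          rw [hr2]
          nlinarith [mul_pos (mul_pos hlam (by positivity : (0:ℝ) < ξ ^ 2)) hT]
        nlinarith
  have c3 : 2 * lam * ξ ^ 2 * T ≤ 4 * k ↔ a ≤ 2 * b - 2 := by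
    constructor <;> intro h
    · nlinarith
    · nlinarith
  have hmain := key_quad a b ha
  constructor
  · rintro ⟨η, h1, h2⟩
    have h2' : η ^ 2 * a - 2 * η * b + 2 ≤ 0 := by rw [ha_def, hb_def]; nlinarith
    obtain ⟨hd, hc⟩ := hmain.1 ⟨η, h1, h2'⟩
    refine ⟨c1.2 hd, ?_⟩
    by_cases hs : 2 * lam * ξ ^ 2 * T ≤ k + r
    · exact Or.inl hs
    · push_neg at hs
      refine Or.inr ⟨hs, c3.2 ?_⟩
      rcases hc with h | h
      · exact absurd (c2.2 h) (by linarith)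
      · exact h
  · rintro ⟨h1, h2⟩
    have hd : 2 * a ≤ b ^ 2 := c1.1 h1
    have hc : a ≤ b ∨ a ≤ 2 * b - 2 := by
      rcases h2 with h | ⟨_, h⟩
      · exact Or.inl (c2.1 h)
      · exact Or.inr (c3.1 h)
    obtain ⟨η, hη1, hη2⟩ := hmain.2 ⟨hd, hc⟩
    exact ⟨η, hη1, by rw [ha_def, hb_def] at hη2; nlinarith⟩
end

section
/- Let k, θ, ξ > 0 and 0 < δt < 1/k, let c ≥ 0 and w ≥ 0, and let Z be a standard normal random variable on a probability space. Then E[exp(c·max(0, w + k(θ − w)·δt + ξ·√(w·δt)·Z))] ≤ exp( c(kθ + νξ)·δt + (c(1 − k·δt) + c²ξ²·δt/2)·w ), where ν = √( ξ²/(4π(1 − k·δt)²) + (1/(2π))·√( ξ⁴/(4(1 − k·δt)⁴) + k²θ²/(1 − k·δt)² ) ). -/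
open MeasureTheory ProbabilityTheory Real

lemma gauss_lint_exp (α β : ℝ) :
    ∫⁻ x, ENNReal.ofReal (Real.exp (α * x + β)) ∂(gaussianReal 0 1)
      = ENNReal.ofReal (Real.exp (β + α ^ 2 / 2)) := by
  rw [gaussianReal_of_var_ne_zero 0 one_ne_zero,
    lintegral_withDensity_eq_lintegral_mul _ (measurable_gaussianPDF 0 1)
      (Measurable.ennreal_ofReal (by fun_prop : Measurable fun x : ℝ => rexp (α * x + β)))]
  have : (fun x => (gaussianPDF 0 1 * fun x => ENNReal.ofReal (rexp (α * x + β))) x)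
      = fun x => ENNReal.ofReal (rexp (β + α ^ 2 / 2)) * gaussianPDF α 1 x := by
    funext x
    simp only [Pi.mul_apply, gaussianPDF]
    rw [← ENNReal.ofReal_mul (gaussianPDFReal_nonneg 0 1 x),
      ← ENNReal.ofReal_mul (exp_nonneg _)]
    congr 1
    simp only [gaussianPDFReal, NNReal.coe_one, mul_one, sub_zero]
    rw [mul_assoc, ← exp_add, mul_comm (rexp _), mul_assoc, ← exp_add]
    congr 1
    ring
  rw [this, lintegral_const_mul _ (measurable_gaussianPDF α 1),
    lintegral_gaussianPDF_eq_one α one_ne_zero, mul_one]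

lemma two_pi_le_exp_one_sq : 2 * Real.pi ≤ (Real.exp 1) ^ 2 := by
  nlinarith [Real.exp_one_gt_d9, Real.pi_lt_d2, Real.pi_pos]

lemma pointwise_bound {c s y : ℝ} (hc : 0 ≤ c) (hs : 0 < s) :
    Real.exp (c * max 0 y) ≤ Real.exp (c * y) + (c * s / Real.exp 1) * Real.exp (-y / s) := by
  rcases le_or_gt 0 y with h | h
  · rw [max_eq_right h]
    have h0 : 0 ≤ (c * s / Real.exp 1) * Real.exp (-y / s) := by positivity
    linarith
  · rw [max_eq_left h.le, mul_zero, Real.exp_zero]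
    have h1 : c * y + 1 ≤ Real.exp (c * y) := Real.add_one_le_exp _
    have h2 : -y / s ≤ Real.exp (-y / s) / Real.exp 1 := by
      have h3 := Real.add_one_le_exp (-y / s - 1)
      rw [Real.exp_sub] at h3
      linarith
    have h4 : c * (-y / s) ≤ c * (Real.exp (-y / s) / Real.exp 1) :=
      mul_le_mul_of_nonneg_left h2 hc
    have h6 : c * (-y / s) * s ≤ c * (Real.exp (-y / s) / Real.exp 1) * s :=
      mul_le_mul_of_nonneg_right h4 hs.le
    have h7 : c * (-y / s) * s = -(c * y) := by field_simp
    have h8 : c * (Real.exp (-y / s) / Real.exp 1) * s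
        = (c * s / Real.exp 1) * Real.exp (-y / s) := by
      field_simp
    rw [h7, h8] at h6
    linarith

/-- One-step conditional estimate for the full truncation Euler scheme of the CIR process:
if `Z` is standard normal, `0 < δt < 1/k`, `c ≥ 0` and `w ≥ 0`, then
`E[exp(c·max(0, w + k(θ−w)δt + ξ√(wδt)Z))] ≤ exp(c(kθ+νξ)δt + (c(1−kδt) + c²ξ²δt/2)w)`. -/
theorem stmt_3 {Ω : Type*} [MeasureSpace Ω] [IsProbabilityMeasure (ℙ : Measure Ω)]
    (k θ ξ δt c w : ℝ) (hk : 0 < k) (hθ : 0 < θ) (hξ : 0 < ξ)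
    (hδt : 0 < δt) (hδt' : δt < 1 / k) (hc : 0 ≤ c) (hw : 0 ≤ w)
    (Z : Ω → ℝ) (hZ : Measure.map Z ℙ = gaussianReal 0 1)
    (ν : ℝ)
    (hν : ν = Real.sqrt (ξ ^ 2 / (4 * Real.pi * (1 - k * δt) ^ 2)
        + (1 / (2 * Real.pi)) * Real.sqrt (ξ ^ 4 / (4 * (1 - k * δt) ^ 4)
            + k ^ 2 * θ ^ 2 / (1 - k * δt) ^ 2))) :
    ∫⁻ ω, ENNReal.ofReal
        (Real.exp (c * max 0 (w + k * (θ - w) * δt + ξ * Real.sqrt (w * δt) * Z ω))) ∂ℙ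
      ≤ ENNReal.ofReal
          (Real.exp (c * (k * θ + ν * ξ) * δt
            + (c * (1 - k * δt) + c ^ 2 * ξ ^ 2 * δt / 2) * w)) := by
  have hk1 : k * δt < 1 := by
    have := (lt_div_iff₀ hk).mp hδt'
    nlinarith
  have hν0 : 0 ≤ ν := hν ▸ Real.sqrt_nonneg _
  obtain ⟨q, hq_def⟩ : ∃ x : ℝ, x = 1 - k * δt := ⟨_, rfl⟩
  obtain ⟨a, ha_def⟩ : ∃ x : ℝ, x = w + k * (θ - w) * δt := ⟨_, rfl⟩
  obtain ⟨σ, hσ_def⟩ : ∃ x : ℝ, x = ξ * Real.sqrt (w * δt) := ⟨_, rfl⟩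
  have hq : 0 < q := by rw [hq_def]; linarith
  have hq0 : q ≠ 0 := ne_of_gt hq
  have hσ : 0 ≤ σ := hσ_def ▸ mul_nonneg hξ.le (Real.sqrt_nonneg _)
  have hσ2 : σ ^ 2 = ξ ^ 2 * (w * δt) := by
    rw [hσ_def, mul_pow, Real.sq_sqrt (by positivity)]
  have ha : 0 ≤ a := by
    rw [ha_def]
    nlinarith [mul_nonneg hw (sub_nonneg.mpr hk1.le), mul_pos (mul_pos hk hθ) hδt]
  obtain ⟨s, hs_def⟩ : ∃ x : ℝ, x = ξ ^ 2 * δt / q := ⟨_, rfl⟩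
  have hs : 0 < s := by rw [hs_def]; positivity
  have hZae : AEMeasurable Z ℙ := by
    by_contra h
    rw [Measure.map_of_not_aemeasurable h] at hZ
    exact IsProbabilityMeasure.ne_zero (gaussianReal 0 1) hZ.symm
  simp only [← hq_def, ← ha_def, ← hσ_def]
  -- measurability
  have mf1 : Measurable fun x : ℝ => ENNReal.ofReal (Real.exp (c * σ * x + c * a)) :=
    Measurable.ennreal_ofReal (by fun_prop)
  have mf2 : Measurable fun x : ℝ => ENNReal.ofReal (Real.exp (-σ / s * x + -a / s)) :=
    Measurable.ennreal_ofReal (by fun_prop)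
  have m1 : ∫⁻ ω, ENNReal.ofReal (Real.exp (c * (a + σ * Z ω))) ∂ℙ
      = ENNReal.ofReal (Real.exp (c * a + (c * σ) ^ 2 / 2)) := by
    have e1 : ∀ x : ℝ, c * (a + σ * x) = c * σ * x + c * a := fun x => by ring
    simp_rw [e1]
    rw [← lintegral_map' mf1.aemeasurable hZae, hZ, gauss_lint_exp]
  have m2 : ∫⁻ ω, ENNReal.ofReal (Real.exp (-(a + σ * Z ω) / s)) ∂ℙ
      = ENNReal.ofReal (Real.exp (-a / s + (-σ / s) ^ 2 / 2)) := by
    have e1 : ∀ x : ℝ, -(a + σ * x) / s = -σ / s * x + -a / s := fun x => by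
      field_simp
      ring
    simp_rw [e1]
    rw [← lintegral_map' mf2.aemeasurable hZae, hZ, gauss_lint_exp]
  -- the real-number final inequality
  have hTeq : c * (k * θ + ν * ξ) * δt + (c * q + c ^ 2 * ξ ^ 2 * δt / 2) * w
      = (c * a + (c * σ) ^ 2 / 2) + c * (ν * ξ * δt) := by
    rw [mul_pow, hσ2, ha_def, hq_def]; ring
  have hX1 : (1 : ℝ) ≤ Real.exp (c * a + (c * σ) ^ 2 / 2) :=
    Real.one_le_exp (by positivity)
  have hY1 : Real.exp (-a / s + (-σ / s) ^ 2 / 2) ≤ 1 := by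
    apply Real.exp_le_one_iff.mpr
    have e2 : (-σ / s) ^ 2 / 2 = q * w / (2 * s) := by
      rw [div_pow, neg_sq, hσ2, hs_def]
      field_simp
    rw [e2, show -a / s + q * w / (2 * s) = (q * w / 2 - a) / s by field_simp; ring]
    apply div_nonpos_of_nonpos_of_nonneg _ hs.le
    rw [ha_def, hq_def]
    nlinarith [mul_nonneg hw (sub_nonneg.mpr hk1.le), mul_pos (mul_pos hk hθ) hδt]
  have hsν : s / Real.exp 1 ≤ ν * ξ * δt := by
    have h2pi : 2 * Real.pi ≤ (Real.exp 1) ^ 2 := two_pi_le_exp_one_sq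
    have hin : ξ ^ 2 / (2 * q ^ 2) ≤ Real.sqrt (ξ ^ 4 / (4 * q ^ 4) + k ^ 2 * θ ^ 2 / q ^ 2) := by
      rw [show ξ ^ 2 / (2 * q ^ 2) = Real.sqrt ((ξ ^ 2 / (2 * q ^ 2)) ^ 2) from
        (Real.sqrt_sq (by positivity)).symm]
      apply Real.sqrt_le_sqrt
      have e3 : (ξ ^ 2 / (2 * q ^ 2)) ^ 2 = ξ ^ 4 / (4 * q ^ 4) := by
        field_simp
        ring
      rw [e3]
      have : 0 ≤ k ^ 2 * θ ^ 2 / q ^ 2 := by positivity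
      linarith
    have hν1 : Real.sqrt (ξ ^ 2 / (2 * Real.pi * q ^ 2)) ≤ ν := by
      rw [hν, ← hq_def]
      apply Real.sqrt_le_sqrt
      have heq : ξ ^ 2 / (2 * Real.pi * q ^ 2)
          = ξ ^ 2 / (4 * Real.pi * q ^ 2) + (1 / (2 * Real.pi)) * (ξ ^ 2 / (2 * q ^ 2)) := by
        field_simp
        ring
      rw [heq]
      have := mul_le_mul_of_nonneg_left hin (by positivity : (0:ℝ) ≤ 1 / (2 * Real.pi))
      linarith
    have hν2 : ξ / (q * Real.exp 1) ≤ Real.sqrt (ξ ^ 2 / (2 * Real.pi * q ^ 2)) := by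
      rw [show ξ / (q * Real.exp 1) = Real.sqrt ((ξ / (q * Real.exp 1)) ^ 2) from
        (Real.sqrt_sq (by positivity)).symm]
      apply Real.sqrt_le_sqrt
      rw [div_pow, mul_pow]
      apply div_le_div_of_nonneg_left (by positivity) (by positivity)
      linarith [mul_le_mul_of_nonneg_left h2pi (sq_nonneg q)]
    have hν3 : ξ / (q * Real.exp 1) ≤ ν := le_trans hν2 hν1
    have h5 : ξ / (q * Real.exp 1) * (ξ * δt) ≤ ν * (ξ * δt) :=
      mul_le_mul_of_nonneg_right hν3 (by positivity)
    calc s / Real.exp 1 = ξ / (q * Real.exp 1) * (ξ * δt) := by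
          rw [hs_def]
          field_simp
      _ ≤ ν * (ξ * δt) := h5
      _ = ν * ξ * δt := by ring
  have hreal : Real.exp (c * a + (c * σ) ^ 2 / 2)
      + (c * s / Real.exp 1) * Real.exp (-a / s + (-σ / s) ^ 2 / 2)
      ≤ Real.exp (c * (k * θ + ν * ξ) * δt + (c * q + c ^ 2 * ξ ^ 2 * δt / 2) * w) := by
    have ht : 0 ≤ c * (ν * ξ * δt) := by positivity
    have step1 : (c * s / Real.exp 1) * Real.exp (-a / s + (-σ / s) ^ 2 / 2)
        ≤ c * (ν * ξ * δt) := by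
      calc (c * s / Real.exp 1) * Real.exp (-a / s + (-σ / s) ^ 2 / 2)
          ≤ (c * s / Real.exp 1) * 1 := mul_le_mul_of_nonneg_left hY1 (by positivity)
        _ = c * (s / Real.exp 1) := by ring
        _ ≤ c * (ν * ξ * δt) := mul_le_mul_of_nonneg_left hsν hc
    calc Real.exp (c * a + (c * σ) ^ 2 / 2)
        + (c * s / Real.exp 1) * Real.exp (-a / s + (-σ / s) ^ 2 / 2)
        ≤ Real.exp (c * a + (c * σ) ^ 2 / 2) * Real.exp (c * (ν * ξ * δt)) := by
          linarith [Real.add_one_le_exp (c * (ν * ξ * δt)),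
            mul_nonneg (sub_nonneg.mpr hX1)
              (sub_nonneg.mpr (Real.one_le_exp ht))]
      _ = Real.exp ((c * a + (c * σ) ^ 2 / 2) + c * (ν * ξ * δt)) := (Real.exp_add _ _).symm
      _ = Real.exp (c * (k * θ + ν * ξ) * δt + (c * q + c ^ 2 * ξ ^ 2 * δt / 2) * w) := by
          rw [hTeq]
  -- assemble
  calc ∫⁻ ω, ENNReal.ofReal (Real.exp (c * max 0 (a + σ * Z ω))) ∂ℙ
      ≤ ∫⁻ ω, (ENNReal.ofReal (Real.exp (c * (a + σ * Z ω)))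
          + ENNReal.ofReal ((c * s / Real.exp 1) * Real.exp (-(a + σ * Z ω) / s))) ∂ℙ := by
        apply lintegral_mono
        intro ω
        dsimp only
        rw [← ENNReal.ofReal_add (Real.exp_nonneg _) (by positivity)]
        exact ENNReal.ofReal_le_ofReal (pointwise_bound hc hs)
    _ = (∫⁻ ω, ENNReal.ofReal (Real.exp (c * (a + σ * Z ω))) ∂ℙ)
        + ∫⁻ ω, ENNReal.ofReal ((c * s / Real.exp 1) * Real.exp (-(a + σ * Z ω) / s)) ∂ℙ := by
        apply lintegral_add_left'
        exact (Measurable.ennreal_ofReal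
          (by fun_prop : Measurable fun x : ℝ => Real.exp (c * (a + σ * x)))).comp_aemeasurable
          hZae
    _ = ENNReal.ofReal (Real.exp (c * a + (c * σ) ^ 2 / 2))
        + ENNReal.ofReal (c * s / Real.exp 1)
          * ENNReal.ofReal (Real.exp (-a / s + (-σ / s) ^ 2 / 2)) := by
        rw [m1]
        congr 1
        simp_rw [ENNReal.ofReal_mul (show (0:ℝ) ≤ c * s / Real.exp 1 by positivity)]
        rw [lintegral_const_mul' _ _ ENNReal.ofReal_ne_top, m2]
    _ ≤ ENNReal.ofReal (Real.exp (c * (k * θ + ν * ξ) * δt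
          + (c * q + c ^ 2 * ξ ^ 2 * δt / 2) * w)) := by
        rw [← ENNReal.ofReal_mul (show (0:ℝ) ≤ c * s / Real.exp 1 by positivity),
          ← ENNReal.ofReal_add (Real.exp_nonneg _) (by positivity)]
        exact ENNReal.ofReal_le_ofReal hreal
end

section
/- Fix k, θ, ξ, λ, y₀ > 0, a horizon T > 0, an integer N ≥ 1, and set δt = T/N; assume δt < δ_T for some δ_T ∈ (0, 1/k). Let Z₀, …, Z_{N−1} be i.i.d. standard normal random variables on a probability space and define ỹ₀ = y₀ and ỹ_{n+1} = ỹ_n + k(θ − ỹ_n⁺)·δt + ξ·√(ỹ_n⁺)·√(δt)·Z_n for 0 ≤ n < N, where x⁺ = max(x,0). Suppose η ≥ 1 satisfies η²λξ²T² − 2η(1 + kT) + 2 ≤ 0. Then E[exp(λ·δt·Σ_{n=0}^{N−1} ỹ_n⁺)] < exp( (η/2)·λ·T²·(kθ + νξ) + η·λ·T·y₀ ), where ν = √( ξ²/(4π(1 − k·δ_T)²) + (1/(2π))·√( ξ⁴/(4(1 − k·δ_T)⁴) + k²θ²/(1 − k·δ_T)² ) ). -/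
open MeasureTheory ProbabilityTheory Real

lemma gauss_lintegral_exp (c : ℝ) :
    ∫⁻ x, ENNReal.ofReal (Real.exp (c * x)) ∂(gaussianReal 0 1)
      = ENNReal.ofReal (Real.exp (c ^ 2 / 2)) := by
  rw [gaussianReal_of_var_ne_zero 0 one_ne_zero,
    lintegral_withDensity_eq_lintegral_mul _ (measurable_gaussianPDF 0 1)
      (by fun_prop)]
  have hpt : ∀ x : ℝ, (gaussianPDF 0 1 * fun x => ENNReal.ofReal (Real.exp (c * x))) x
      = ENNReal.ofReal (Real.exp (c ^ 2 / 2)) * ENNReal.ofReal (gaussianPDFReal c 1 x) := by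
    intro x
    have h1 : gaussianPDFReal 0 1 x * Real.exp (c * x)
        = Real.exp (c ^ 2 / 2) * gaussianPDFReal c 1 x := by
      simp only [gaussianPDFReal]
      rw [mul_assoc, ← Real.exp_add, mul_left_comm, ← Real.exp_add]
      congr 1
      push_cast
      ring
    simp only [Pi.mul_apply, gaussianPDF]
    rw [← ENNReal.ofReal_mul (gaussianPDFReal_nonneg 0 1 x), h1,
      ENNReal.ofReal_mul (Real.exp_nonneg _)]
  simp only [hpt]
  rw [lintegral_const_mul _ ((measurable_gaussianPDFReal c 1).ennreal_ofReal)]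
  have := lintegral_gaussianPDFReal_eq_one c (one_ne_zero)
  rw [this, mul_one]

lemma max_le_exp_div (c t : ℝ) (hc : 0 < c) : max t 0 ≤ Real.exp (c*t) / (c * Real.exp 1) := by
  have h0 : 0 < c * Real.exp 1 := by positivity
  apply max_le _ (by positivity)
  rw [le_div_iff₀ h0]
  have key : Real.exp (c*t) = Real.exp (c*t-1) * Real.exp 1 := by
    rw [← Real.exp_add]; ring_nf
  nlinarith [Real.add_one_le_exp (c*t-1), Real.exp_pos 1]

lemma gauss_lintegral_pospart (a : ℝ) (ha : 0 ≤ a) :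
    ∫⁻ x, ENNReal.ofReal (max (-x - a) 0) ∂(gaussianReal 0 1)
      ≤ ENNReal.ofReal (Real.exp (-(1/2) - a^2/2)) := by
  set c := max a 1 with hcdef
  have hc1 : 1 ≤ c := le_max_right _ _
  have hca : a ≤ c := le_max_left _ _
  have hc0 : 0 < c := lt_of_lt_of_le one_pos hc1
  calc ∫⁻ x, ENNReal.ofReal (max (-x - a) 0) ∂(gaussianReal 0 1)
      ≤ ∫⁻ x, ENNReal.ofReal ((Real.exp (-(c*a)) / (c * Real.exp 1)) * Real.exp ((-c) * x))
          ∂(gaussianReal 0 1) := by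
        apply lintegral_mono; intro x; apply ENNReal.ofReal_le_ofReal
        calc max (-x-a) 0 ≤ Real.exp (c*(-x-a)) / (c*Real.exp 1) := max_le_exp_div c _ hc0
        _ = (Real.exp (-(c*a)) / (c * Real.exp 1)) * Real.exp ((-c) * x) := by
            rw [div_mul_eq_mul_div, ← Real.exp_add]; ring_nf
    _ = ENNReal.ofReal (Real.exp (-(c*a)) / (c * Real.exp 1))
          * ENNReal.ofReal (Real.exp ((-c) ^ 2 / 2)) := by
        have hsplit : ∀ x : ℝ, ENNReal.ofReal
              ((Real.exp (-(c*a)) / (c * Real.exp 1)) * Real.exp ((-c) * x))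
            = ENNReal.ofReal (Real.exp (-(c*a)) / (c * Real.exp 1))
              * ENNReal.ofReal (Real.exp ((-c) * x)) :=
          fun x => ENNReal.ofReal_mul (by positivity)
        simp only [hsplit]
        rw [lintegral_const_mul _ (by fun_prop), gauss_lintegral_exp]
    _ ≤ ENNReal.ofReal (Real.exp (-(1/2) - a^2/2)) := by
        rw [← ENNReal.ofReal_mul (by positivity)]
        apply ENNReal.ofReal_le_ofReal
        rw [div_mul_eq_mul_div, ← Real.exp_add, div_le_iff₀ (by positivity)]
        have hkey : Real.exp (-(1/2) - a^2/2) * Real.exp 1 = Real.exp (1/2 - a^2/2) := by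
          rw [← Real.exp_add]; ring_nf
        rcases max_cases a 1 with ⟨h1, h2⟩ | ⟨h1, h2⟩ <;> rw [hcdef, h1]
        · have e1 : -(a*a) + (-a)^2/2 = -(a^2/2) := by ring
          have h5 : Real.exp (-(1/2) - a^2/2) * (a * Real.exp 1)
              = a * Real.exp (1/2 - a^2/2) := by rw [← hkey]; ring
          have h3 : Real.exp (-(a^2/2)) ≤ Real.exp (1/2 - a^2/2) :=
            Real.exp_le_exp.mpr (by linarith)
          have h4 : Real.exp (1/2 - a^2/2) ≤ a * Real.exp (1/2 - a^2/2) :=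
            le_mul_of_one_le_left (Real.exp_pos _).le h2
          rw [e1, h5]; linarith
        · have h5 : Real.exp (-(1/2) - a^2/2) * (1 * Real.exp 1)
              = Real.exp (1/2 - a^2/2) := by rw [← hkey]; ring
          rw [h5]
          apply Real.exp_le_exp.mpr
          nlinarith


lemma mul_exp_neg_le (r x : ℝ) (hr : 0 < r) : x * Real.exp (-(r*x)) ≤ 1/(r * Real.exp 1) := by
  have h := max_le_exp_div r x hr
  have hx : x ≤ Real.exp (r*x) / (r*Real.exp 1) := le_trans (le_max_left _ _) h
  have hepos : 0 < Real.exp (-(r*x)) := Real.exp_pos _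
  calc x * Real.exp (-(r*x)) ≤ (Real.exp (r*x) / (r*Real.exp 1)) * Real.exp (-(r*x)) :=
        mul_le_mul_of_nonneg_right hx hepos.le
  _ = 1/(r*Real.exp 1) := by rw [div_mul_eq_mul_div, ← Real.exp_add]; simp

lemma exp_max_le (μ t : ℝ) (hμ : 0 ≤ μ) :
    Real.exp (μ * max t 0) ≤ Real.exp (μ*t) + μ * max (-t) 0 := by
  rcases le_total t 0 with h | h
  · rw [max_eq_right h, max_eq_left (neg_nonneg.mpr h)]
    have h2 := Real.add_one_le_exp (μ*t)
    have : μ * -t = -(μ*t) := by ring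
    rw [mul_zero, Real.exp_zero, this]
    linarith
  · rw [max_eq_left h, max_eq_right (neg_nonpos.mpr h)]
    simp

set_option maxHeartbeats 1000000 in
lemma core_step (k θ ξ δt δT ν : ℝ) (hk : 0 < k) (hθ : 0 < θ) (hξ : 0 < ξ)
    (hδt : 0 < δt) (hδtδT : δt < δT) (hβ : 0 < 1 - k * δT)
    (hν0 : 0 ≤ ν) (hν2 : ξ^2 / (Real.exp 2 * (1 - k*δT)^2) ≤ ν^2)
    (μ w : ℝ) (hμ : 0 ≤ μ) :
    ∫⁻ x, ENNReal.ofReal (Real.exp (μ * max (w + k*(θ - max w 0)*δt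
        + ξ * Real.sqrt (max w 0) * Real.sqrt δt * x) 0)) ∂(gaussianReal 0 1)
      ≤ ENNReal.ofReal (Real.exp ((μ*(1-k*δt) + μ^2*ξ^2*δt/2) * max w 0
          + μ*(k*θ + ν*ξ)*δt)) := by
  have hkδt : k * δt < 1 := by nlinarith
  have hνξ : 0 ≤ ν * ξ := mul_nonneg hν0 hξ.le
  rcases le_or_gt w 0 with hw | hw
  · -- degenerate case: w ≤ 0
    rw [max_eq_right hw]
    simp only [Real.sqrt_zero, mul_zero, zero_mul, add_zero]
    rw [lintegral_const]
    simp only [measure_univ, mul_one]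
    apply ENNReal.ofReal_le_ofReal
    apply Real.exp_le_exp.mpr
    have h1 : max (w + k*(θ - 0)*δt) 0 ≤ k*θ*δt := by
      apply max_le
      · nlinarith
      · positivity
    nlinarith [mul_le_mul_of_nonneg_left h1 hμ, mul_nonneg (mul_nonneg hμ hνξ) hδt.le]
  · -- main case: w > 0
    rw [max_eq_left hw.le]
    set m : ℝ := (1-k*δt)*w + k*θ*δt with hm
    set s : ℝ := ξ * Real.sqrt w * Real.sqrt δt with hs
    have hs0 : 0 < s :=
      mul_pos (mul_pos hξ (Real.sqrt_pos.mpr hw)) (Real.sqrt_pos.mpr hδt)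
    have hs2 : s^2 = ξ^2 * w * δt := by
      rw [hs, mul_pow, mul_pow, Real.sq_sqrt hw.le, Real.sq_sqrt hδt.le]
    have hm0 : 0 ≤ m := by
      nlinarith [mul_pos (show (0:ℝ) < 1 - k*δt by linarith) hw, mul_pos (mul_pos hk hθ) hδt]
    set a : ℝ := m / s with ha
    have ha0 : 0 ≤ a := div_nonneg hm0 hs0.le
    have hsa : s * a = m := by rw [ha]; field_simp
    have harg : ∀ x : ℝ, w + k*(θ - w)*δt + ξ * Real.sqrt w * Real.sqrt δt * x
        = m + s * x := by intro x; rw [hm, hs]; ring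
    -- the key sqrt-term estimate
    have hr : 0 < (1-k*δT)^2/(ξ^2*δt) := by positivity
    set r : ℝ := (1-k*δT)^2/(ξ^2*δt) with hrdef
    have ha2 : r * w ≤ a^2 := by
      have hmge : (1-k*δT)*w ≤ m := by
        nlinarith [mul_pos (mul_pos hk hθ) hδt,
          mul_pos (mul_pos hk (show (0:ℝ) < δT - δt by linarith)) hw]
      have hb0 : 0 ≤ (1-k*δT)*w := by positivity
      have hm2 : ((1-k*δT)*w)^2 ≤ m^2 := pow_le_pow_left₀ hb0 hmge 2
      have haa : a^2 = m^2/s^2 := by rw [ha, div_pow]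
      rw [haa, hs2, hrdef, div_mul_eq_mul_div, div_le_div_iff₀ (by positivity) (by positivity)]
      calc (1-k*δT)^2*w * (ξ^2*w*δt) = ((1-k*δT)*w)^2 * (ξ^2*δt) := by ring
        _ ≤ m^2 * (ξ^2*δt) := mul_le_mul_of_nonneg_right hm2 (by positivity)
    have he2 : (Real.exp (-(1/2) - a^2/2))^2 = Real.exp (-1) * Real.exp (-a^2) := by
      rw [sq, ← Real.exp_add, ← Real.exp_add]; congr 1; ring
    have hee : Real.exp 1 ^ 2 = Real.exp 2 := by rw [sq, ← Real.exp_add]; norm_num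
    have hkey : s * Real.exp (-(1/2) - a^2/2) ≤ ν*ξ*δt := by
      have hsq : (s * Real.exp (-(1/2) - a^2/2))^2 ≤ (ν*ξ*δt)^2 := by
        calc (s * Real.exp (-(1/2) - a^2/2))^2
            = s^2 * (Real.exp (-(1/2) - a^2/2))^2 := by ring
          _ = (ξ^2*w*δt) * (Real.exp (-1) * Real.exp (-a^2)) := by rw [hs2, he2]
          _ ≤ (ξ^2*w*δt) * (Real.exp (-1) * Real.exp (-(r*w))) := by
              apply mul_le_mul_of_nonneg_left _ (by positivity)
              exact mul_le_mul_of_nonneg_left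
                (Real.exp_le_exp.mpr (by linarith)) (Real.exp_pos _).le
          _ = (ξ^2*δt) * Real.exp (-1) * (w * Real.exp (-(r*w))) := by ring
          _ ≤ (ξ^2*δt) * Real.exp (-1) * (1/(r*Real.exp 1)) := by
              apply mul_le_mul_of_nonneg_left (mul_exp_neg_le r w hr) (by positivity)
          _ = (ξ^2*δt) * (Real.exp (-1) * (1/(r*Real.exp 1))) := by ring
          _ = (ξ^2*δt) * (1/(r*Real.exp 2)) := by
              rw [Real.exp_neg]
              have h9 : r ≠ 0 := ne_of_gt hr
              have h8 : Real.exp 1 ≠ 0 := Real.exp_ne_zero 1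
              have h7 : Real.exp 2 ≠ 0 := Real.exp_ne_zero 2
              field_simp
              rw [← hee]
          _ = (ξ^2 / (Real.exp 2 * (1-k*δT)^2)) * (ξ^2*δt^2) := by
              rw [hrdef]
              have h9 : (1-k*δT) ≠ 0 := ne_of_gt hβ
              have h7 : Real.exp 2 ≠ 0 := Real.exp_ne_zero 2
              field_simp
              try rw [← hee]
              try ring
          _ ≤ ν^2 * (ξ^2*δt^2) :=
              mul_le_mul_of_nonneg_right hν2 (by positivity)
          _ = (ν*ξ*δt)^2 := by ring
      have h1 := Real.sqrt_le_sqrt hsq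
      rwa [Real.sqrt_sq (by positivity), Real.sqrt_sq (by positivity)] at h1
    -- pointwise bound
    have hpt : ∀ x : ℝ, ENNReal.ofReal (Real.exp (μ * max (m + s * x) 0))
        ≤ ENNReal.ofReal (Real.exp (μ*m) * Real.exp ((μ*s) * x))
          + ENNReal.ofReal ((μ*s) * max (-x - a) 0) := by
      intro x
      rw [← ENNReal.ofReal_add (by positivity) (by positivity)]
      apply ENNReal.ofReal_le_ofReal
      have h1 := exp_max_le μ (m + s*x) hμ
      have h2 : μ * max (-(m + s*x)) 0 = (μ*s) * max (-x - a) 0 := by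
        have hneg : -(m + s*x) = (-x - a) * s := by rw [← hsa]; ring
        rw [hneg, show ((-x-a) * s) ⊔ 0 = ((-x-a) ⊔ 0) * s by
          rw [max_mul_of_nonneg _ _ hs0.le, zero_mul]]
        ring
      have h3 : Real.exp (μ * (m + s*x)) = Real.exp (μ*m) * Real.exp ((μ*s)*x) := by
        rw [← Real.exp_add]; ring_nf
      rw [← h3, ← h2]
      exact h1
    calc ∫⁻ x, ENNReal.ofReal (Real.exp (μ * max (w + k*(θ - w)*δt
            + ξ * Real.sqrt w * Real.sqrt δt * x) 0)) ∂(gaussianReal 0 1)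
        ≤ ∫⁻ x, (ENNReal.ofReal (Real.exp (μ*m) * Real.exp ((μ*s) * x))
            + ENNReal.ofReal ((μ*s) * max (-x - a) 0)) ∂(gaussianReal 0 1) := by
          apply lintegral_mono
          intro x
          simp only [harg]
          exact hpt x
      _ = (∫⁻ x, ENNReal.ofReal (Real.exp (μ*m) * Real.exp ((μ*s) * x)) ∂(gaussianReal 0 1))
          + ∫⁻ x, ENNReal.ofReal ((μ*s) * max (-x - a) 0) ∂(gaussianReal 0 1) := by
          apply lintegral_add_left
          fun_prop
      _ ≤ ENNReal.ofReal (Real.exp (μ*m + (μ*s)^2/2))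
          + ENNReal.ofReal (μ * (ν*ξ*δt)) := by
          apply add_le_add
          · have hsplit : ∀ x : ℝ, ENNReal.ofReal (Real.exp (μ*m) * Real.exp ((μ*s) * x))
                = ENNReal.ofReal (Real.exp (μ*m)) * ENNReal.ofReal (Real.exp ((μ*s) * x)) :=
              fun x => ENNReal.ofReal_mul (Real.exp_nonneg _)
            simp only [hsplit]
            rw [lintegral_const_mul _ (by fun_prop), gauss_lintegral_exp,
              ← ENNReal.ofReal_mul (Real.exp_nonneg _), ← Real.exp_add]
          · have hsplit : ∀ x : ℝ, ENNReal.ofReal ((μ*s) * max (-x - a) 0)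
                = ENNReal.ofReal (μ*s) * ENNReal.ofReal (max (-x - a) 0) :=
              fun x => ENNReal.ofReal_mul (by positivity)
            simp only [hsplit]
            rw [lintegral_const_mul _ (by fun_prop)]
            calc ENNReal.ofReal (μ*s) * ∫⁻ x, ENNReal.ofReal (max (-x - a) 0) ∂(gaussianReal 0 1)
                ≤ ENNReal.ofReal (μ*s) * ENNReal.ofReal (Real.exp (-(1/2) - a^2/2)) :=
                  mul_le_mul_right (gauss_lintegral_pospart a ha0) _
              _ = ENNReal.ofReal (μ * (s * Real.exp (-(1/2) - a^2/2))) := by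
                  rw [← ENNReal.ofReal_mul (by positivity)]; ring_nf
              _ ≤ ENNReal.ofReal (μ * (ν*ξ*δt)) :=
                  ENNReal.ofReal_le_ofReal (mul_le_mul_of_nonneg_left hkey hμ)
      _ ≤ ENNReal.ofReal (Real.exp ((μ*(1-k*δt) + μ^2*ξ^2*δt/2) * w + μ*(k*θ + ν*ξ)*δt)) := by
          rw [← ENNReal.ofReal_add (by positivity) (by positivity)]
          apply ENNReal.ofReal_le_ofReal
          have hP : 0 ≤ μ*m + (μ*s)^2/2 := by positivity
          have hP1 : 1 ≤ Real.exp (μ*m + (μ*s)^2/2) := Real.one_le_exp hP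
          have hB := Real.add_one_le_exp (μ * (ν*ξ*δt))
          have hBpos : 0 ≤ μ * (ν*ξ*δt) := by positivity
          have hprod : Real.exp (μ*m + (μ*s)^2/2) * Real.exp (μ * (ν*ξ*δt))
              = Real.exp ((μ*(1-k*δt) + μ^2*ξ^2*δt/2) * w + μ*(k*θ + ν*ξ)*δt) := by
            rw [← Real.exp_add]
            congr 1
            have h4 : (μ*s)^2 = μ^2 * s^2 := by ring
            rw [h4, hs2, hm]
            ring
          nlinarith [Real.exp_pos (μ * (ν*ξ*δt))]

lemma step_bound {N : ℕ} (i : Fin N) (Φ ψ : (Fin N → ℝ) → ENNReal)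
    (hΦ : Measurable Φ) (hψ : Measurable ψ)
    (hind : ∀ z x, ψ (Function.update z i x) = ψ z)
    (hle : ∀ z, ∫⁻ x, Φ (Function.update z i x) ∂(gaussianReal 0 1) ≤ ψ z) :
    ∫⁻ z, Φ z ∂(Measure.pi fun _ : Fin N => gaussianReal 0 1)
      ≤ ∫⁻ z, ψ z ∂(Measure.pi fun _ : Fin N => gaussianReal 0 1) := by
  apply lintegral_le_of_lmarginal_le {i} hΦ hψ
  intro z
  rw [lmarginal_singleton, lmarginal_singleton]
  calc ∫⁻ x, Φ (Function.update z i x) ∂(gaussianReal 0 1) ≤ ψ z := hle z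
    _ = ∫⁻ x, ψ (Function.update z i x) ∂(gaussianReal 0 1) := by
        simp_rw [hind]
        rw [lintegral_const, measure_univ, mul_one]

noncomputable def fte (k θ ξ δt y₀ : ℝ) (N : ℕ) : ℕ → (Fin N → ℝ) → ℝ
  | 0 => fun _ => y₀
  | (n+1) => fun z => fte k θ ξ δt y₀ N n z
      + k * (θ - max (fte k θ ξ δt y₀ N n z) 0) * δt
      + ξ * Real.sqrt (max (fte k θ ξ δt y₀ N n z) 0) * Real.sqrt δt
        * (if h : n < N then z ⟨n, h⟩ else 0)

lemma fte_measurable (k θ ξ δt y₀ : ℝ) (N : ℕ) (n : ℕ) :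
    Measurable (fte k θ ξ δt y₀ N n) := by
  induction n with
  | zero => exact measurable_const
  | succ n ih =>
    show Measurable (fun z => _)
    apply Measurable.add
    · apply Measurable.add
      · exact ih
      · exact (((ih.max measurable_const).const_sub θ).const_mul k).mul_const δt
    · apply Measurable.mul
      · exact (((ih.max measurable_const).sqrt).const_mul ξ).mul_const _
      · by_cases h : n < N
        · simp only [dif_pos h]; exact measurable_pi_apply _
        · simp only [dif_neg h]; exact measurable_const

lemma fte_update (k θ ξ δt y₀ : ℝ) (N : ℕ) (n : ℕ) (i : Fin N) (hni : n ≤ i.1)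
    (z : Fin N → ℝ) (x : ℝ) :
    fte k θ ξ δt y₀ N n (Function.update z i x) = fte k θ ξ δt y₀ N n z := by
  induction n with
  | zero => rfl
  | succ n ih =>
    have hn : n ≤ i.1 := le_trans (Nat.le_succ n) hni
    show fte k θ ξ δt y₀ N n _ + _ + _ = _
    rw [ih hn]
    congr 2
    by_cases h : n < N
    · simp only [dif_pos h]
      apply Function.update_of_ne
      intro hc
      have hc2 := congrArg Fin.val hc
      simp only [] at hc2
      omega
    · simp only [dif_neg h]

noncomputable def useq (lam δt k ξ : ℝ) : ℕ → ℝ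
  | 0 => 0
  | (j+1) => lam * δt + useq lam δt k ξ j * (1 - k*δt)
      + (useq lam δt k ξ j)^2 * ξ^2 * δt / 2

noncomputable def Phi (k θ ξ δt y₀ lam : ℝ) (N d : ℕ) (z : Fin N → ℝ) : ENNReal :=
  ENNReal.ofReal (Real.exp (lam * δt * ∑ j ∈ Finset.range (N-d), max (fte k θ ξ δt y₀ N j z) 0
    + useq lam δt k ξ d * max (fte k θ ξ δt y₀ N (N-d) z) 0))

lemma Phi_measurable (k θ ξ δt y₀ lam : ℝ) (N d : ℕ) :
    Measurable (Phi k θ ξ δt y₀ lam N d) := by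
  apply Measurable.ennreal_ofReal
  apply Measurable.exp
  apply Measurable.add
  · exact (Finset.measurable_sum _ fun j _ =>
      (fte_measurable k θ ξ δt y₀ N j).max measurable_const).const_mul _
  · exact ((fte_measurable k θ ξ δt y₀ N (N-d)).max measurable_const).const_mul _

lemma useq_nonneg (lam δt k ξ : ℝ) (hlam : 0 ≤ lam) (hδt : 0 ≤ δt) (hkδt : k * δt ≤ 1) :
    ∀ j, 0 ≤ useq lam δt k ξ j := by
  intro j
  induction j with
  | zero => exact le_refl 0
  | succ j ih =>
    show 0 ≤ lam * δt + useq lam δt k ξ j * (1 - k*δt) + (useq lam δt k ξ j)^2 * ξ^2 * δt / 2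
    have h1 : 0 ≤ lam * δt := mul_nonneg hlam hδt
    have h2 : 0 ≤ useq lam δt k ξ j * (1 - k*δt) := mul_nonneg ih (by linarith)
    have h3 : 0 ≤ (useq lam δt k ξ j)^2 * ξ^2 * δt / 2 := by positivity
    linarith

set_option maxHeartbeats 1000000 in
lemma Phi_step (k θ ξ δt δT ν lam y₀ : ℝ) (hk : 0 < k) (hθ : 0 < θ) (hξ : 0 < ξ)
    (hδt : 0 < δt) (hδtδT : δt < δT) (hβ : 0 < 1 - k * δT)
    (hν0 : 0 ≤ ν) (hν2 : ξ^2 / (Real.exp 2 * (1 - k*δT)^2) ≤ ν^2)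
    (hlam : 0 ≤ lam) (N d : ℕ) (hd : d < N) :
    ∫⁻ z, Phi k θ ξ δt y₀ lam N d z ∂(Measure.pi fun _ : Fin N => gaussianReal 0 1)
      ≤ ENNReal.ofReal (Real.exp ((k*θ + ν*ξ) * δt * useq lam δt k ξ d))
        * ∫⁻ z, Phi k θ ξ δt y₀ lam N (d+1) z
            ∂(Measure.pi fun _ : Fin N => gaussianReal 0 1) := by
  have hkδt1 : k * δt < 1 := by nlinarith
  have hu0 := useq_nonneg lam δt k ξ hlam hδt.le hkδt1.le
  have hidx : N - (d+1) = N - d - 1 := by omega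
  have hNd : N - d = (N - d - 1) + 1 := by omega
  have hiN : N - d - 1 < N := by omega
  set i : Fin N := ⟨N - d - 1, hiN⟩ with hi
  have hupd : ∀ (j : ℕ), j ≤ N - d - 1 → ∀ (z : Fin N → ℝ) (x : ℝ),
      fte k θ ξ δt y₀ N j (Function.update z i x) = fte k θ ξ δt y₀ N j z :=
    fun j hj z x => fte_update k θ ξ δt y₀ N j i hj z x
  rw [← lintegral_const_mul _ (Phi_measurable k θ ξ δt y₀ lam N (d+1))]
  apply step_bound i _ _ (Phi_measurable k θ ξ δt y₀ lam N d)
    (measurable_const.mul (Phi_measurable k θ ξ δt y₀ lam N (d+1)))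
  · -- invariance of the RHS under updating coordinate i
    intro z x
    have hsum : ∑ j ∈ Finset.range (N-(d+1)),
          max (fte k θ ξ δt y₀ N j (Function.update z i x)) 0
        = ∑ j ∈ Finset.range (N-(d+1)), max (fte k θ ξ δt y₀ N j z) 0 :=
      Finset.sum_congr rfl fun j hj => by
        rw [hupd j (by have := Finset.mem_range.mp hj; omega) z x]
    have hlast : fte k θ ξ δt y₀ N (N-(d+1)) (Function.update z i x)
        = fte k θ ξ δt y₀ N (N-(d+1)) z := by
      rw [hidx]; exact hupd _ (le_refl _) z x
    congr 1
    unfold Phi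
    simp only [Pi.mul_apply]
    rw [hsum, hlast]
  · -- the one-coordinate integral estimate
    intro z
    set w : ℝ := fte k θ ξ δt y₀ N (N-d-1) z with hw
    -- rewrite the integrand
    have hexpand : ∀ x : ℝ, Phi k θ ξ δt y₀ lam N d (Function.update z i x)
        = ENNReal.ofReal (Real.exp (lam * δt * ∑ j ∈ Finset.range (N-d-1),
            max (fte k θ ξ δt y₀ N j z) 0 + lam * δt * max w 0))
          * ENNReal.ofReal (Real.exp (useq lam δt k ξ d
            * max (w + k*(θ - max w 0)*δt + ξ * Real.sqrt (max w 0) * Real.sqrt δt * x) 0)) := by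
      intro x
      unfold Phi
      rw [← ENNReal.ofReal_mul (Real.exp_nonneg _), ← Real.exp_add]
      congr 2
      have h1 : ∑ j ∈ Finset.range (N-d), max (fte k θ ξ δt y₀ N j (Function.update z i x)) 0
          = ∑ j ∈ Finset.range (N-d-1), max (fte k θ ξ δt y₀ N j z) 0 + max w 0 := by
        rw [hNd, Finset.sum_range_succ]
        congr 1
        · exact Finset.sum_congr rfl fun j hj => by
            rw [hupd j (by have := Finset.mem_range.mp hj; omega) z x]
        · rw [hupd (N-d-1) (le_refl _) z x]
      have h2 : fte k θ ξ δt y₀ N (N-d) (Function.update z i x)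
          = w + k*(θ - max w 0)*δt + ξ * Real.sqrt (max w 0) * Real.sqrt δt * x := by
        rw [hNd]
        show fte k θ ξ δt y₀ N (N-d-1) _ + _ + _ = _
        rw [hupd (N-d-1) (le_refl _) z x, dif_pos hiN]
        have hux : Function.update z i x ⟨N-d-1, hiN⟩ = x := Function.update_self i x z
        rw [hux]
      rw [h1, h2]
      ring
    simp only [hexpand]
    rw [lintegral_const_mul _ (by fun_prop)]
    calc ENNReal.ofReal (Real.exp (lam * δt * ∑ j ∈ Finset.range (N-d-1),
            max (fte k θ ξ δt y₀ N j z) 0 + lam * δt * max w 0))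
          * ∫⁻ x, ENNReal.ofReal (Real.exp (useq lam δt k ξ d
              * max (w + k*(θ - max w 0)*δt + ξ * Real.sqrt (max w 0) * Real.sqrt δt * x) 0))
            ∂(gaussianReal 0 1)
        ≤ ENNReal.ofReal (Real.exp (lam * δt * ∑ j ∈ Finset.range (N-d-1),
            max (fte k θ ξ δt y₀ N j z) 0 + lam * δt * max w 0))
          * ENNReal.ofReal (Real.exp ((useq lam δt k ξ d * (1-k*δt)
              + (useq lam δt k ξ d)^2*ξ^2*δt/2) * max w 0
            + useq lam δt k ξ d * (k*θ + ν*ξ) * δt)) := by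
          exact mul_le_mul_right (core_step k θ ξ δt δT ν hk hθ hξ hδt hδtδT hβ hν0 hν2
            (useq lam δt k ξ d) w (hu0 d)) _
      _ = ENNReal.ofReal (Real.exp ((k*θ + ν*ξ) * δt * useq lam δt k ξ d))
          * Phi k θ ξ δt y₀ lam N (d+1) z := by
          unfold Phi
          rw [← ENNReal.ofReal_mul (Real.exp_nonneg _), ← ENNReal.ofReal_mul (Real.exp_nonneg _),
            ← Real.exp_add, ← Real.exp_add]
          congr 2
          rw [hidx]
          have hrec : useq lam δt k ξ (d+1) = lam * δt + useq lam δt k ξ d * (1 - k*δt)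
              + (useq lam δt k ξ d)^2 * ξ^2 * δt / 2 := rfl
          rw [hrec]
          ring

lemma pi_estimate (k θ ξ δt δT ν lam y₀ : ℝ) (hk : 0 < k) (hθ : 0 < θ) (hξ : 0 < ξ)
    (hδt : 0 < δt) (hδtδT : δt < δT) (hβ : 0 < 1 - k * δT)
    (hν0 : 0 ≤ ν) (hν2 : ξ^2 / (Real.exp 2 * (1 - k*δT)^2) ≤ ν^2)
    (hlam : 0 ≤ lam) (hy₀ : 0 ≤ y₀) (N : ℕ) :
    ∫⁻ z, ENNReal.ofReal (Real.exp (lam * δt *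
        ∑ j ∈ Finset.range N, max (fte k θ ξ δt y₀ N j z) 0))
      ∂(Measure.pi fun _ : Fin N => gaussianReal 0 1)
      ≤ ENNReal.ofReal (Real.exp ((k*θ + ν*ξ) * δt
          * (∑ j ∈ Finset.range N, useq lam δt k ξ j) + useq lam δt k ξ N * y₀)) := by
  have chain : ∀ d, d ≤ N →
      ∫⁻ z, Phi k θ ξ δt y₀ lam N 0 z ∂(Measure.pi fun _ : Fin N => gaussianReal 0 1)
        ≤ ENNReal.ofReal (Real.exp ((k*θ + ν*ξ) * δt * ∑ j ∈ Finset.range d, useq lam δt k ξ j))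
          * ∫⁻ z, Phi k θ ξ δt y₀ lam N d z ∂(Measure.pi fun _ : Fin N => gaussianReal 0 1) := by
    intro d
    induction d with
    | zero =>
      intro _
      simp only [Finset.range_zero, Finset.sum_empty, mul_zero, Real.exp_zero,
        ENNReal.ofReal_one, one_mul]
      exact le_refl _
    | succ d ih =>
      intro hdN
      have hd : d < N := hdN
      calc ∫⁻ z, Phi k θ ξ δt y₀ lam N 0 z ∂(Measure.pi fun _ : Fin N => gaussianReal 0 1)
          ≤ ENNReal.ofReal (Real.exp ((k*θ + ν*ξ) * δt
              * ∑ j ∈ Finset.range d, useq lam δt k ξ j))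
            * ∫⁻ z, Phi k θ ξ δt y₀ lam N d z
                ∂(Measure.pi fun _ : Fin N => gaussianReal 0 1) := ih hd.le
        _ ≤ ENNReal.ofReal (Real.exp ((k*θ + ν*ξ) * δt
              * ∑ j ∈ Finset.range d, useq lam δt k ξ j))
            * (ENNReal.ofReal (Real.exp ((k*θ + ν*ξ) * δt * useq lam δt k ξ d))
              * ∫⁻ z, Phi k θ ξ δt y₀ lam N (d+1) z
                  ∂(Measure.pi fun _ : Fin N => gaussianReal 0 1)) :=
            mul_le_mul_right (Phi_step k θ ξ δt δT ν lam y₀ hk hθ hξ hδt hδtδT hβ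
              hν0 hν2 hlam N d hd) _
        _ = ENNReal.ofReal (Real.exp ((k*θ + ν*ξ) * δt
              * ∑ j ∈ Finset.range (d+1), useq lam δt k ξ j))
            * ∫⁻ z, Phi k θ ξ δt y₀ lam N (d+1) z
                ∂(Measure.pi fun _ : Fin N => gaussianReal 0 1) := by
            rw [← mul_assoc, ← ENNReal.ofReal_mul (Real.exp_nonneg _), ← Real.exp_add,
              Finset.sum_range_succ]
            congr 3
            ring
  have hPhi0 : ∀ z : Fin N → ℝ, ENNReal.ofReal (Real.exp (lam * δt *
      ∑ j ∈ Finset.range N, max (fte k θ ξ δt y₀ N j z) 0)) = Phi k θ ξ δt y₀ lam N 0 z := by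
    intro z
    unfold Phi
    rw [show useq lam δt k ξ 0 = 0 from rfl, Nat.sub_zero, zero_mul, add_zero]
  have hPhiN : ∀ z : Fin N → ℝ, Phi k θ ξ δt y₀ lam N N z
      = ENNReal.ofReal (Real.exp (useq lam δt k ξ N * y₀)) := by
    intro z
    unfold Phi
    rw [Nat.sub_self]
    rw [show fte k θ ξ δt y₀ N 0 z = y₀ from rfl]
    rw [Finset.range_zero, Finset.sum_empty, mul_zero, zero_add, max_eq_left hy₀]
  calc ∫⁻ z, ENNReal.ofReal (Real.exp (lam * δt *
        ∑ j ∈ Finset.range N, max (fte k θ ξ δt y₀ N j z) 0))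
      ∂(Measure.pi fun _ : Fin N => gaussianReal 0 1)
      = ∫⁻ z, Phi k θ ξ δt y₀ lam N 0 z ∂(Measure.pi fun _ : Fin N => gaussianReal 0 1) := by
        simp_rw [hPhi0]
    _ ≤ ENNReal.ofReal (Real.exp ((k*θ + ν*ξ) * δt * ∑ j ∈ Finset.range N, useq lam δt k ξ j))
        * ∫⁻ z, Phi k θ ξ δt y₀ lam N N z ∂(Measure.pi fun _ : Fin N => gaussianReal 0 1) :=
        chain N le_rfl
    _ = ENNReal.ofReal (Real.exp ((k*θ + ν*ξ) * δt * ∑ j ∈ Finset.range N, useq lam δt k ξ j))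
        * ENNReal.ofReal (Real.exp (useq lam δt k ξ N * y₀)) := by
        simp_rw [hPhiN]
        rw [lintegral_const, measure_univ, mul_one]
    _ = ENNReal.ofReal (Real.exp ((k*θ + ν*ξ) * δt
          * (∑ j ∈ Finset.range N, useq lam δt k ξ j) + useq lam δt k ξ N * y₀)) := by
        rw [← ENNReal.ofReal_mul (Real.exp_nonneg _), ← Real.exp_add]

lemma useq_le (lam δt k ξ η T : ℝ) (N : ℕ) (hlam : 0 < lam) (hδt : 0 < δt) (hk : 0 < k)
    (hξ : 0 < ξ) (hη : 1 ≤ η) (hT : 0 < T) (hNT : δt * N = T)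
    (hηineq : η^2*lam*ξ^2*T^2 - 2*η*(1+k*T) + 2 ≤ 0) (hkδt : k*δt < 1) :
    ∀ j ≤ N, useq lam δt k ξ j ≤ η * lam * δt * j := by
  intro j
  induction j with
  | zero => intro _; simp [useq]
  | succ j ih =>
    intro hj
    have hjN : j ≤ N := Nat.le_of_succ_le hj
    have hAle := ih hjN
    set A := useq lam δt k ξ j with hA
    have hA0 : 0 ≤ A := useq_nonneg lam δt k ξ hlam.le hδt.le hkδt.le j
    have hδtj : δt * j ≤ T := by
      rw [← hNT]
      have : (j:ℝ) ≤ (N:ℝ) := Nat.cast_le.mpr hjN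
      nlinarith
    have hAT : A ≤ η * lam * T := by
      calc A ≤ η * lam * δt * j := hAle
        _ = η * lam * (δt * j) := by ring
        _ ≤ η * lam * T := by
            apply mul_le_mul_of_nonneg_left hδtj
            positivity
    have hq : lam + A^2*ξ^2/2 - A*k - η*lam ≤ 0 := by
      have hAA : A*A ≤ A*(η*lam*T) := mul_le_mul_of_nonneg_left hAT hA0
      have h5 : A*A*ξ^2 ≤ A*(η*lam*T)*ξ^2 :=
        mul_le_mul_of_nonneg_right hAA (sq_nonneg ξ)
      rcases le_or_gt (η*lam*T*ξ^2/2) k with hcase | hcase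
      · have h6 : A*(η*lam*T*ξ^2/2 - k) ≤ 0 :=
          mul_nonpos_of_nonneg_of_nonpos hA0 (by linarith)
        nlinarith
      · have h7 : lam*(η^2*lam*ξ^2*T^2 - 2*η*(1+k*T) + 2) ≤ 0 :=
          mul_nonpos_of_nonneg_of_nonpos hlam.le hηineq
        have h8 : A*(η*lam*T*ξ^2/2 - k) ≤ (η*lam*T)*(η*lam*T*ξ^2/2 - k) :=
          mul_le_mul_of_nonneg_right hAT (by linarith)
        nlinarith
    show lam * δt + A * (1 - k*δt) + A^2 * ξ^2 * δt / 2 ≤ η * lam * δt * (j+1 : ℕ)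
    push_cast
    have h9 := mul_le_mul_of_nonneg_left hq hδt.le
    nlinarith

set_option maxHeartbeats 1000000 in
/-- Explicit exponential moment bound (3.17.2) for the full truncation Euler chain of the
CIR process: `E[exp(λ δt Σ_{n<N} ỹ_n⁺)] < exp((η/2)λT²(kθ+νξ) + ηλT y₀)`. -/
theorem stmt_5 {Ω : Type*} [MeasureSpace Ω] [IsProbabilityMeasure (ℙ : Measure Ω)]
    (k θ ξ lam y₀ T : ℝ) (hk : 0 < k) (hθ : 0 < θ) (hξ : 0 < ξ)
    (hlam : 0 < lam) (hy₀ : 0 < y₀) (hT : 0 < T)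
    (N : ℕ) (hN : 1 ≤ N) (δt : ℝ) (hδt : δt = T / N)
    (δT : ℝ) (hδT : δT ∈ Set.Ioo 0 (1 / k)) (hδtδT : δt < δT)
    (Z : ℕ → Ω → ℝ)
    (hZindep : iIndepFun
        (fun i : Fin N => Z i) ℙ)
    (hZlaw : ∀ i : Fin N, Measure.map (Z i) ℙ = gaussianReal 0 1)
    (Y : ℕ → Ω → ℝ) (hY0 : ∀ ω, Y 0 ω = y₀)
    (hYrec : ∀ n < N, ∀ ω, Y (n + 1) ω
        = Y n ω + k * (θ - max (Y n ω) 0) * δt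
          + ξ * Real.sqrt (max (Y n ω) 0) * Real.sqrt δt * Z n ω)
    (η : ℝ) (hη : 1 ≤ η)
    (hηineq : η ^ 2 * lam * ξ ^ 2 * T ^ 2 - 2 * η * (1 + k * T) + 2 ≤ 0)
    (ν : ℝ)
    (hν : ν = Real.sqrt (ξ ^ 2 / (4 * Real.pi * (1 - k * δT) ^ 2)
        + (1 / (2 * Real.pi)) * Real.sqrt (ξ ^ 4 / (4 * (1 - k * δT) ^ 4)
            + k ^ 2 * θ ^ 2 / (1 - k * δT) ^ 2))) :
    ∫⁻ ω, ENNReal.ofReal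
        (Real.exp (lam * δt * ∑ n ∈ Finset.range N, max (Y n ω) 0)) ∂ℙ
      < ENNReal.ofReal
          (Real.exp (η / 2 * lam * T ^ 2 * (k * θ + ν * ξ) + η * lam * T * y₀)) := by
  obtain ⟨hδT0, hδTk⟩ := hδT
  have hNpos : (0:ℝ) < N := by exact_mod_cast Nat.lt_of_lt_of_le Nat.zero_lt_one hN
  have hδt0 : 0 < δt := by rw [hδt]; positivity
  have hNT : δt * N = T := by rw [hδt]; field_simp
  have hkδT : k * δT < 1 := by
    have := (lt_div_iff₀ hk).mp hδTk
    linarith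
  have hβ : 0 < 1 - k * δT := by linarith
  have hkδt1 : k * δt < 1 := by nlinarith
  have hν0 : 0 ≤ ν := hν ▸ Real.sqrt_nonneg _
  -- the ν² lower bound
  have hpi : 2 * Real.pi ≤ Real.exp 2 := by
    have h1 : Real.pi < 3.15 := Real.pi_lt_d2
    have h2 : (2.7182818283 : ℝ) < Real.exp 1 := Real.exp_one_gt_d9
    have hee : Real.exp 2 = Real.exp 1 ^ 2 := by rw [sq, ← Real.exp_add]; norm_num
    have h3 : (2.7182818283:ℝ)^2 < Real.exp 1 ^ 2 :=
      pow_lt_pow_left₀ h2 (by norm_num) (by norm_num)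
    rw [hee]
    nlinarith
  have hν2 : ξ^2 / (Real.exp 2 * (1 - k*δT)^2) ≤ ν^2 := by
    have hpi0 := Real.pi_pos
    have hsq : ν^2 = ξ^2 / (4*Real.pi*(1-k*δT)^2)
        + (1/(2*Real.pi)) * Real.sqrt (ξ^4/(4*(1-k*δT)^4) + k^2*θ^2/(1-k*δT)^2) := by
      rw [hν, Real.sq_sqrt]
      positivity
    have hβne : (1-k*δT) ≠ 0 := ne_of_gt hβ
    have h4 : Real.sqrt (ξ^4/(4*(1-k*δT)^4)) = ξ^2/(2*(1-k*δT)^2) := by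
      rw [show ξ^4/(4*(1-k*δT)^4) = (ξ^2/(2*(1-k*δT)^2))^2 by field_simp; ring,
        Real.sqrt_sq (by positivity)]
    have h5 : ξ^2/(2*(1-k*δT)^2) ≤ Real.sqrt (ξ^4/(4*(1-k*δT)^4) + k^2*θ^2/(1-k*δT)^2) := by
      rw [← h4]
      apply Real.sqrt_le_sqrt
      have : 0 ≤ k^2*θ^2/(1-k*δT)^2 := by positivity
      linarith
    have h6 : ξ^2/(2*Real.pi*(1-k*δT)^2) ≤ ν^2 := by
      rw [hsq]
      have h7 : (1/(2*Real.pi)) * (ξ^2/(2*(1-k*δT)^2))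
          ≤ (1/(2*Real.pi)) * Real.sqrt (ξ^4/(4*(1-k*δT)^4) + k^2*θ^2/(1-k*δT)^2) :=
        mul_le_mul_of_nonneg_left h5 (by positivity)
      have h8 : ξ^2/(2*Real.pi*(1-k*δT)^2) = ξ^2/(4*Real.pi*(1-k*δT)^2)
          + (1/(2*Real.pi)) * (ξ^2/(2*(1-k*δT)^2)) := by
        field_simp
        ring
      linarith
    calc ξ^2 / (Real.exp 2 * (1-k*δT)^2) ≤ ξ^2/(2*Real.pi*(1-k*δT)^2) := by
          apply div_le_div_of_nonneg_left (by positivity) (by positivity)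
          nlinarith [sq_nonneg (1-k*δT)]
      _ ≤ ν^2 := h6
  -- a.e.-measurability of the Gaussian increments and the law of the vector
  have haem : ∀ i : Fin N, AEMeasurable (Z (i:ℕ)) ℙ := by
    intro i
    by_contra h
    have h1 := hZlaw i
    rw [Measure.map_of_not_aemeasurable h] at h1
    have h2 : (gaussianReal 0 1) Set.univ = 1 := measure_univ
    rw [← h1] at h2
    simp at h2
  have hZZaem : AEMeasurable (fun ω => fun i : Fin N => Z (i:ℕ) ω) ℙ := by
    refine ⟨fun ω => fun i : Fin N => (haem i).mk _ ω,
      measurable_pi_lambda _ (fun i => (haem i).measurable_mk), ?_⟩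
    have hall : ∀ᵐ ω ∂ℙ, ∀ i : Fin N, Z (i:ℕ) ω = (haem i).mk _ ω :=
      ae_all_iff.mpr fun i => (haem i).ae_eq_mk
    filter_upwards [hall] with ω hω
    funext i
    exact hω i
  have hmap : Measure.map (fun ω => fun i : Fin N => Z (i:ℕ) ω) ℙ
      = Measure.pi (fun _ : Fin N => gaussianReal 0 1) := by
    symm
    apply Measure.pi_eq
    intro s hs
    rw [Measure.map_apply_of_aemeasurable hZZaem (MeasurableSet.univ_pi hs)]
    have hpre : (fun ω => fun i : Fin N => Z (i:ℕ) ω) ⁻¹' (Set.univ.pi s)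
        = ⋂ i ∈ Finset.univ, (fun ω => Z ((i : Fin N):ℕ) ω) ⁻¹' (s i) := by
      ext ω
      simp [Set.mem_pi]
    rw [hpre, hZindep.measure_inter_preimage_eq_mul Finset.univ (fun i _ => hs i)]
    apply Finset.prod_congr rfl
    intro i _
    rw [← hZlaw i, Measure.map_apply_of_aemeasurable (haem i) (hs i)]
  -- identify Y with the explicit chain
  have hYfte : ∀ n, n ≤ N → ∀ ω, Y n ω = fte k θ ξ δt y₀ N n (fun i : Fin N => Z (i:ℕ) ω) := by
    intro n
    induction n with
    | zero => intro _ ω; rw [hY0 ω]; rfl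
    | succ n ih =>
      intro hn ω
      have hnN : n < N := hn
      rw [hYrec n hnN ω, ih hnN.le ω]
      show _ = fte k θ ξ δt y₀ N n _ + _ + _ * (if h : n < N then _ else 0)
      rw [dif_pos hnN]
  -- transfer to the product space
  have hFmeas : Measurable (fun z : Fin N → ℝ => ENNReal.ofReal (Real.exp (lam * δt *
      ∑ j ∈ Finset.range N, max (fte k θ ξ δt y₀ N j z) 0))) := by
    apply Measurable.ennreal_ofReal
    apply Measurable.exp
    exact (Finset.measurable_sum _ fun j _ =>
      (fte_measurable k θ ξ δt y₀ N j).max measurable_const).const_mul _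
  have htransfer : ∫⁻ ω, ENNReal.ofReal
        (Real.exp (lam * δt * ∑ n ∈ Finset.range N, max (Y n ω) 0)) ∂ℙ
      = ∫⁻ z, ENNReal.ofReal (Real.exp (lam * δt *
          ∑ j ∈ Finset.range N, max (fte k θ ξ δt y₀ N j z) 0))
        ∂(Measure.pi fun _ : Fin N => gaussianReal 0 1) := by
    rw [← hmap, lintegral_map' hFmeas.aemeasurable hZZaem]
    apply lintegral_congr
    intro ω
    have hsums : ∑ n ∈ Finset.range N, max (Y n ω) 0
        = ∑ j ∈ Finset.range N, max (fte k θ ξ δt y₀ N j (fun i : Fin N => Z (i:ℕ) ω)) 0 :=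
      Finset.sum_congr rfl fun n hn => by rw [hYfte n (Finset.mem_range.mp hn).le ω]
    rw [hsums]
  rw [htransfer]
  -- apply the product-space estimate
  have hmain := pi_estimate k θ ξ δt δT ν lam y₀ hk hθ hξ hδt0 hδtδT hβ hν0 hν2
    hlam.le hy₀.le N
  apply lt_of_le_of_lt hmain
  -- final numeric comparison
  apply (ENNReal.ofReal_lt_ofReal_iff (Real.exp_pos _)).mpr
  apply Real.exp_lt_exp.mpr
  have huB := useq_le lam δt k ξ η T N hlam hδt0 hk hξ hη hT hNT hηineq hkδt1
  have hu0 := useq_nonneg lam δt k ξ hlam.le hδt0.le hkδt1.le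
  have hsum : ∑ j ∈ Finset.range N, useq lam δt k ξ j
      ≤ η * lam * δt * (N*(N-1)/2 : ℝ) := by
    calc ∑ j ∈ Finset.range N, useq lam δt k ξ j
        ≤ ∑ j ∈ Finset.range N, η * lam * δt * (j:ℝ) :=
          Finset.sum_le_sum fun j hj => huB j (Finset.mem_range.mp hj).le
      _ = η * lam * δt * ∑ j ∈ Finset.range N, (j:ℝ) := by
          rw [Finset.mul_sum]
      _ = η * lam * δt * (N*(N-1)/2 : ℝ) := by
          congr 1
          have hgauss := Finset.sum_range_id_mul_two N
          have : ((∑ i ∈ Finset.range N, i) * 2 : ℕ) = (N * (N-1) : ℕ) := hgauss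
          have hcast : ((∑ i ∈ Finset.range N, i : ℕ):ℝ) * 2 = (N:ℝ) * ((N:ℝ)-1) := by
            have h1 : ((N-1:ℕ):ℝ) = (N:ℝ) - 1 := by
              rw [Nat.cast_sub hN]; norm_num
            rw [← h1]
            exact_mod_cast this
          have h2 : ((∑ i ∈ Finset.range N, i : ℕ):ℝ) = ∑ j ∈ Finset.range N, (j:ℝ) := by
            push_cast; rfl
          linarith [hcast, h2]
  have hkν : 0 < k*θ + ν*ξ := by positivity
  have huN : useq lam δt k ξ N ≤ η * lam * T := by
    calc useq lam δt k ξ N ≤ η * lam * δt * N := huB N le_rfl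
      _ = η * lam * (δt * N) := by ring
      _ = η * lam * T := by rw [hNT]
  have hδtsq : δt * (δt * (N*(N-1)/2)) = T^2/2 - T*δt/2 := by
    have : δt * δt * (N * ((N:ℝ)-1)) = (δt*N)*(δt*N) - (δt*N)*δt := by ring
    rw [hNT] at this
    nlinarith [this]
  have hterm1 : (k*θ + ν*ξ) * δt * (∑ j ∈ Finset.range N, useq lam δt k ξ j)
      ≤ (k*θ + ν*ξ) * (η * lam * (T^2/2 - T*δt/2)) := by
    have h1 : δt * (∑ j ∈ Finset.range N, useq lam δt k ξ j)
        ≤ δt * (η * lam * δt * (N*(N-1)/2 : ℝ)) :=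
      mul_le_mul_of_nonneg_left hsum hδt0.le
    have h2 : δt * (η * lam * δt * (N*(N-1)/2 : ℝ)) = η * lam * (T^2/2 - T*δt/2) := by
      rw [show δt * (η * lam * δt * (N*(N-1)/2 : ℝ))
        = η * lam * (δt * (δt * ((N:ℝ)*((N:ℝ)-1)/2))) by ring, hδtsq]
    calc (k*θ + ν*ξ) * δt * (∑ j ∈ Finset.range N, useq lam δt k ξ j)
        = (k*θ + ν*ξ) * (δt * (∑ j ∈ Finset.range N, useq lam δt k ξ j)) := by ring
      _ ≤ (k*θ + ν*ξ) * (η * lam * (T^2/2 - T*δt/2)) := by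
          apply mul_le_mul_of_nonneg_left _ hkν.le
          rw [← h2]
          exact h1
  have hterm2 : useq lam δt k ξ N * y₀ ≤ η * lam * T * y₀ :=
    mul_le_mul_of_nonneg_right huN hy₀.le
  have hfin : (k*θ + ν*ξ) * (η * lam * (T^2/2 - T*δt/2)) + η * lam * T * y₀
      < η / 2 * lam * T ^ 2 * (k * θ + ν * ξ) + η * lam * T * y₀ := by
    have : (k*θ + ν*ξ) * (η * lam * (T*δt/2)) > 0 := by positivity
    nlinarith
  linarith
end

section
/- Fix k, θ, ξ, y₀ > 0, a horizon T > 0, an integer N ≥ 1, and set δt = T/N. Let Z₀, …, Z_{N−1} be i.i.d. standard normal random variables on a probability space and define ỹ₀ = y₀ and ỹ_{n+1} = ỹ_n + k(θ − ỹ_n⁺)·δt + ξ·√(ỹ_n⁺)·√(δt)·Z_n for 0 ≤ n < N, where x⁺ = max(x,0). Let ε > 0 satisfy ε·ξ² ≤ 2k and define Γ_n = exp( Σ_{i=0}^{n−1} ( −ε·k·δt·ỹ_i⁺ + ε·ξ·√(ỹ_i⁺·δt)·Z_i ) ) for 0 ≤ n ≤ N (with Γ₀ = 1). Then E[Γ_n]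 ≤ 1 for every 0 ≤ n ≤ N. -/
open MeasureTheory ProbabilityTheory
open Real



lemma lintegral_exp_mul_std_gaussian (a : ℝ) :
    ∫⁻ z, ENNReal.ofReal (Real.exp (a * z)) ∂(gaussianReal 0 1)
      = ENNReal.ofReal (Real.exp (a ^ 2 / 2)) := by
  rw [gaussianReal_of_var_ne_zero 0 one_ne_zero,
    lintegral_withDensity_eq_lintegral_mul _ (measurable_gaussianPDF 0 1)
      (by fun_prop : Measurable fun z : ℝ => ENNReal.ofReal (Real.exp (a * z)))]
  have hkey : ∀ z : ℝ, gaussianPDF 0 1 z * ENNReal.ofReal (Real.exp (a * z))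
      = ENNReal.ofReal (Real.exp (a ^ 2 / 2) * ((Real.sqrt (2 * π))⁻¹
          * Real.exp (-(1/2) * (z - a) ^ 2))) := by
    intro z
    rw [gaussianPDF, ← ENNReal.ofReal_mul (gaussianPDFReal_nonneg 0 1 z)]
    congr 1
    simp only [gaussianPDFReal, NNReal.coe_one, mul_one]
    rw [mul_assoc, ← Real.exp_add,
      show Real.exp (a ^ 2 / 2) * ((Real.sqrt (2 * π))⁻¹ * Real.exp (-(1/2) * (z - a) ^ 2))
        = (Real.sqrt (2 * π))⁻¹ * Real.exp (a ^ 2 / 2 + -(1/2) * (z - a) ^ 2) by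
          rw [Real.exp_add]; ring]
    congr 1
    ring
  simp only [Pi.mul_apply, hkey]
  have hint : Integrable (fun z : ℝ => Real.exp (a ^ 2 / 2) * ((Real.sqrt (2 * π))⁻¹
      * Real.exp (-(1/2) * (z - a) ^ 2))) := by
    exact (((integrable_exp_neg_mul_sq (by norm_num : (0:ℝ) < 1/2)).comp_sub_right
      a).const_mul _).const_mul _
  rw [← ofReal_integral_eq_lintegral_ofReal hint
    (Filter.Eventually.of_forall fun x => by positivity)]
  rw [integral_const_mul, integral_const_mul]
  have : (∫ z : ℝ, Real.exp (-(1/2) * (z - a) ^ 2))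
      = ∫ z : ℝ, Real.exp (-(1/2) * z ^ 2) :=
    integral_sub_right_eq_self (fun z => Real.exp (-(1/2) * z ^ 2)) a
  rw [this, integral_gaussian]
  have h2π : (0:ℝ) < Real.sqrt (2 * π) := Real.sqrt_pos.mpr (by positivity)
  rw [show π / (1/2) = 2 * π by ring, inv_mul_cancel₀ h2π.ne', mul_one]

noncomputable def cirPsi (k θ ξ y₀ δt : ℝ) : ℕ → (ℕ → ℝ) → ℝ
  | 0, _ => y₀
  | (n+1), z => cirPsi k θ ξ y₀ δt n z + k * (θ - max (cirPsi k θ ξ y₀ δt n z) 0) * δt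
      + ξ * Real.sqrt (max (cirPsi k θ ξ y₀ δt n z) 0) * Real.sqrt δt * z n

@[fun_prop]
lemma cirPsi_measurable (k θ ξ y₀ δt : ℝ) (n : ℕ) : Measurable (cirPsi k θ ξ y₀ δt n) := by
  induction n with
  | zero => exact measurable_const
  | succ n ih =>
    simp only [cirPsi]
    fun_prop

lemma cirPsi_congr (k θ ξ y₀ δt : ℝ) (n : ℕ) {z z' : ℕ → ℝ}
    (h : ∀ j < n, z j = z' j) : cirPsi k θ ξ y₀ δt n z = cirPsi k θ ξ y₀ δt n z' := by
  induction n with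
  | zero => rfl
  | succ n ih =>
    have h' : ∀ j < n, z j = z' j := fun j hj => h j (hj.trans (Nat.lt_succ_self n))
    simp only [cirPsi, ih h', h n (Nat.lt_succ_self n)]

lemma iIndepFun_congr_ae {ι Ω : Type*} {β : ι → Type*} [MeasurableSpace Ω] {μ : Measure Ω}
    [m : ∀ i, MeasurableSpace (β i)] {f g : ∀ i, Ω → β i}
    (h : iIndepFun f μ) (h' : ∀ i, f i =ᵐ[μ] g i) : iIndepFun g μ := by
  rw [iIndepFun_iff_measure_inter_preimage_eq_mul] at h ⊢
  intro S sets hsets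
  have hae : ∀ i ∈ S, (f i ⁻¹' sets i : Set Ω) =ᵐ[μ] (g i ⁻¹' sets i) := by
    intro i _
    refine Filter.eventuallyEq_set.mpr ?_
    filter_upwards [h' i] with ω hω
    simp [Set.mem_preimage, hω]
  have h1 : μ (⋂ i ∈ S, g i ⁻¹' sets i) = μ (⋂ i ∈ S, f i ⁻¹' sets i) := by
    refine measure_congr (Filter.eventuallyEq_set.mpr ?_)
    have hall : ∀ᵐ ω ∂μ, ∀ i ∈ S, f i ω = g i ω :=
      (ae_ball_iff S.countable_toSet).mpr fun i _ => h' i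
    filter_upwards [hall] with ω hω
    simp only [Set.mem_iInter, Set.mem_preimage]
    exact forall₂_congr fun i hi => by rw [hω i hi]
  rw [h1, h S hsets]
  exact Finset.prod_congr rfl fun i hi => measure_congr (hae i hi)

noncomputable def cirTerm (k θ ξ y₀ δt ε : ℝ) (i : ℕ) (v : ℕ → ℝ) : ℝ :=
  -(ε * k * δt * max (cirPsi k θ ξ y₀ δt i v) 0)
    + ε * ξ * Real.sqrt (max (cirPsi k θ ξ y₀ δt i v) 0 * δt) * v i

@[fun_prop]
lemma cirTerm_measurable (k θ ξ y₀ δt ε : ℝ) (i : ℕ) :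
    Measurable (cirTerm k θ ξ y₀ δt ε i) := by
  unfold cirTerm; fun_prop

lemma cirTerm_congr (k θ ξ y₀ δt ε : ℝ) (i : ℕ) {z z' : ℕ → ℝ}
    (h : ∀ j ≤ i, z j = z' j) :
    cirTerm k θ ξ y₀ δt ε i z = cirTerm k θ ξ y₀ δt ε i z' := by
  unfold cirTerm
  rw [cirPsi_congr k θ ξ y₀ δt i (fun j hj => h j hj.le), h i le_rfl]

def finExtend (n : ℕ) (v : Fin n → ℝ) (j : ℕ) : ℝ := if h : j < n then v ⟨j, h⟩ else 0

@[fun_prop]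
lemma finExtend_measurable (n : ℕ) : Measurable (finExtend n) :=
  measurable_pi_lambda _ fun j => by
    unfold finExtend; split
    · exact measurable_pi_apply _
    · exact measurable_const

lemma finExtend_lt {n : ℕ} (v : Fin n → ℝ) {j : ℕ} (hj : j < n) :
    finExtend n v j = v ⟨j, hj⟩ := by simp [finExtend, hj]

/-- Discrete supermartingale-type exponential estimate (3.20.3) for the full truncation
Euler chain of the CIR process: with `εξ² ≤ 2k` and
`Γ_n = exp(Σ_{i<n}(−εkδt ỹ_i⁺ + εξ√(ỹ_i⁺ δt) Z_i))` one has `E[Γ_n] ≤ 1`. -/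
theorem stmt_12 {Ω : Type*} [MeasureSpace Ω] [IsProbabilityMeasure (ℙ : Measure Ω)]
    (k θ ξ y₀ T : ℝ) (hk : 0 < k) (hθ : 0 < θ) (hξ : 0 < ξ) (hy₀ : 0 < y₀) (hT : 0 < T)
    (N : ℕ) (hN : 1 ≤ N) (δt : ℝ) (hδt : δt = T / N)
    (Z : ℕ → Ω → ℝ)
    (hZindep : iIndepFun
        (fun i : Fin N => Z i) ℙ)
    (hZlaw : ∀ i : Fin N, Measure.map (Z i) ℙ = gaussianReal 0 1)
    (Y : ℕ → Ω → ℝ) (hY0 : ∀ ω, Y 0 ω = y₀)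
    (hYrec : ∀ n < N, ∀ ω, Y (n + 1) ω
        = Y n ω + k * (θ - max (Y n ω) 0) * δt
          + ξ * Real.sqrt (max (Y n ω) 0) * Real.sqrt δt * Z n ω)
    (ε : ℝ) (hε : 0 < ε) (hεk : ε * ξ ^ 2 ≤ 2 * k) :
    ∀ n ≤ N, ∫⁻ ω, ENNReal.ofReal
        (Real.exp (∑ i ∈ Finset.range n,
          (-(ε * k * δt * max (Y i ω) 0)
            + ε * ξ * Real.sqrt (max (Y i ω) 0 * δt) * Z i ω))) ∂ℙ ≤ 1 := by
  have hNpos : (0:ℝ) < (N:ℝ) := by exact_mod_cast Nat.pos_of_ne_zero (by omega)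
  have hδt0 : 0 < δt := hδt ▸ div_pos hT hNpos
  -- a.e. measurable versions of the noise
  have hZae : ∀ i : Fin N, AEMeasurable (Z i) ℙ := fun i =>
    aemeasurable_of_map_neZero ⟨by rw [hZlaw i]; exact IsProbabilityMeasure.ne_zero _⟩
  classical
  set Z' : ℕ → Ω → ℝ := fun i => if h : i < N then (hZae ⟨i, h⟩).mk _ else fun _ => 0 with hZ'def
  have hZ'meas : ∀ i, Measurable (Z' i) := by
    intro i
    rw [hZ'def]
    by_cases h : i < N
    · simpa [h] using (hZae ⟨i, h⟩).measurable_mk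
    · simpa [h] using (measurable_const : Measurable (fun _ : Ω => (0:ℝ)))
  have hZ'ae : ∀ i, (hi : i < N) → Z i =ᵐ[ℙ] Z' i := by
    intro i hi
    simpa [hZ'def, hi] using (hZae ⟨i, hi⟩).ae_eq_mk
  have hZ'indep : iIndepFun
      (fun i : Fin N => Z' i) ℙ :=
    iIndepFun_congr_ae hZindep (fun i => hZ'ae i i.2)
  have hZ'law : ∀ i, (hi : i < N) → Measure.map (Z' i) ℙ = gaussianReal 0 1 := by
    intro i hi
    rw [← Measure.map_congr (hZ'ae i hi)]
    exact hZlaw ⟨i, hi⟩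
  -- a.e. identification of Y with the deterministic recursion applied to Z'
  have hA : ∀ᵐ ω ∂(ℙ : Measure Ω), ∀ i, i < N → Z i ω = Z' i ω := by
    rw [ae_all_iff]
    intro i
    by_cases h : i < N
    · filter_upwards [hZ'ae i h] with ω hω _ using hω
    · filter_upwards with ω h' using absurd h' h
  have hYψ : ∀ᵐ ω ∂(ℙ : Measure Ω), ∀ n ≤ N, Y n ω = cirPsi k θ ξ y₀ δt n (fun j => Z' j ω) := by
    filter_upwards [hA] with ω hω
    intro n
    induction n with
    | zero => intro _; simpa [cirPsi] using hY0 ω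
    | succ n ih =>
      intro hn1
      have hn : n < N := hn1
      rw [hYrec n hn ω, ih hn.le, hω n hn]
      simp only [cirPsi]
  -- the main claim for the measurable modification
  have claim : ∀ n ≤ N, ∫⁻ ω, ENNReal.ofReal
      (Real.exp (∑ i ∈ Finset.range n, cirTerm k θ ξ y₀ δt ε i (fun j => Z' j ω))) ∂ℙ ≤ 1 := by
    intro n
    induction n with
    | zero => intro _; simp
    | succ n ih =>
      intro hn1
      have hn : n < N := hn1
      have ihn := ih hn.le
      -- notation
      set Ψ : ℕ → (ℕ → ℝ) → ℝ := cirPsi k θ ξ y₀ δt with hΨ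
      set W : Ω → (Fin n → ℝ) := fun ω i => Z' i ω with hW
      have hWmeas : Measurable W := measurable_pi_lambda _ fun i => hZ'meas i
      -- independence of the past from Z' n
      have h2 : IndepFun W (Z' n) ℙ := by
        set S : Finset (Fin N) := Finset.univ.filter (fun i => (i : ℕ) < n) with hS
        set T : Finset (Fin N) := {(⟨n, hn⟩ : Fin N)} with hT
        have hST : Disjoint S T := by
          rw [Finset.disjoint_singleton_right, hS]
          simp
        have h1 := hZ'indep.indepFun_finset S T hST (fun i => hZ'meas i)
        have hφ : Measurable (fun (u : {x // x ∈ S} → ℝ) (j : Fin n) =>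
            u ⟨⟨(j : ℕ), (j.2.trans hn)⟩,
              Finset.mem_filter.mpr ⟨Finset.mem_univ _, j.2⟩⟩) :=
          measurable_pi_lambda _ fun j => measurable_pi_apply _
        have hψT : Measurable (fun (u : {x // x ∈ T} → ℝ) =>
            u ⟨⟨n, hn⟩, Finset.mem_singleton_self _⟩) := measurable_pi_apply _
        exact h1.comp hφ hψT
      -- product structure of the joint law
      have hmap : Measure.map (fun ω => (W ω, Z' n ω)) ℙ = (Measure.map W ℙ).prod (gaussianReal 0 1) := by
        rw [← hZ'law n hn]
        exact (indepFun_iff_map_prod_eq_prod_map_map hWmeas.aemeasurable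
          (hZ'meas n).aemeasurable).mp h2
      haveI : IsProbabilityMeasure (Measure.map W ℙ) := Measure.isProbabilityMeasure_map hWmeas.aemeasurable
      -- the function on the product space
      set C : (Fin n → ℝ) → ℝ := fun v =>
        (∑ i ∈ Finset.range n, cirTerm k θ ξ y₀ δt ε i (finExtend n v))
          + -(ε * k * δt * max (Ψ n (finExtend n v)) 0) with hC
      set A : (Fin n → ℝ) → ℝ := fun v =>
        ε * ξ * Real.sqrt (max (Ψ n (finExtend n v)) 0 * δt) with hA2
      set f : (Fin n → ℝ) × ℝ → ENNReal := fun p =>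
        ENNReal.ofReal (Real.exp (C p.1 + A p.1 * p.2)) with hfdef
      have hΨe : ∀ i, Measurable fun v : Fin n → ℝ => Ψ i (finExtend n v) := fun i =>
        (cirPsi_measurable k θ ξ y₀ δt i).comp (finExtend_measurable n)
      have hterm : ∀ i, Measurable fun v : Fin n → ℝ =>
          cirTerm k θ ξ y₀ δt ε i (finExtend n v) := fun i =>
        (cirTerm_measurable k θ ξ y₀ δt ε i).comp (finExtend_measurable n)
      have hCmeas : Measurable C := by
        rw [hC]
        exact (Finset.measurable_sum _ fun i _ => hterm i).add
          ((((hΨe n).max measurable_const).const_mul _).neg)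
      have hAmeas : Measurable A := by
        rw [hA2]
        exact (Real.continuous_sqrt.measurable.comp
          (((hΨe n).max measurable_const).mul_const _)).const_mul _
      have hfmeas : Measurable f := by
        rw [hfdef]
        exact ENNReal.measurable_ofReal.comp (Real.measurable_exp.comp
          (((hCmeas.comp measurable_fst)).add
            ((hAmeas.comp measurable_fst).mul measurable_snd)))
      -- pointwise identification
      have hpw : ∀ ω, ENNReal.ofReal
          (Real.exp (∑ i ∈ Finset.range (n+1), cirTerm k θ ξ y₀ δt ε i (fun j => Z' j ω)))
          = f (W ω, Z' n ω) := by
        intro ω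
        have hext : ∀ j < n, finExtend n (W ω) j = Z' j ω := fun j hj => by
          rw [finExtend_lt (W ω) hj]
        have hterm_eq : ∀ i < n, cirTerm k θ ξ y₀ δt ε i (finExtend n (W ω))
            = cirTerm k θ ξ y₀ δt ε i (fun j => Z' j ω) := fun i hi =>
          cirTerm_congr _ _ _ _ _ _ _ fun j hj => hext j (lt_of_le_of_lt hj hi)
        have hΨeq : Ψ n (finExtend n (W ω)) = Ψ n (fun j => Z' j ω) :=
          cirPsi_congr _ _ _ _ _ _ fun j hj => hext j hj
        rw [hfdef]
        have hkey : C (W ω) + A (W ω) * Z' n ω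
            = ∑ i ∈ Finset.range (n+1), cirTerm k θ ξ y₀ δt ε i (fun j => Z' j ω) := by
          rw [hC, hA2]
          simp only
          rw [Finset.sum_range_succ,
            Finset.sum_congr rfl (fun i hi => hterm_eq i (Finset.mem_range.mp hi)), hΨeq]
          unfold cirTerm
          rw [← hΨ]
          ring
        simp only [hkey]
      calc ∫⁻ ω, ENNReal.ofReal
            (Real.exp (∑ i ∈ Finset.range (n+1), cirTerm k θ ξ y₀ δt ε i (fun j => Z' j ω))) ∂ℙ
          = ∫⁻ ω, f (W ω, Z' n ω) ∂ℙ := lintegral_congr hpw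
        _ = ∫⁻ p, f p ∂(Measure.map (fun ω => (W ω, Z' n ω)) ℙ) :=
            (lintegral_map hfmeas (hWmeas.prodMk (hZ'meas n))).symm
        _ = ∫⁻ p, f p ∂((Measure.map W ℙ).prod (gaussianReal 0 1)) := by rw [hmap]
        _ = ∫⁻ v, ∫⁻ z, f (v, z) ∂(gaussianReal 0 1) ∂(Measure.map W ℙ) :=
            lintegral_prod f hfmeas.aemeasurable
        _ = ∫⁻ v, ENNReal.ofReal (Real.exp (C v + (A v) ^ 2 / 2)) ∂(Measure.map W ℙ) := by
            refine lintegral_congr fun v => ?_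
            have : ∀ z : ℝ, f (v, z)
                = ENNReal.ofReal (Real.exp (C v)) * ENNReal.ofReal (Real.exp (A v * z)) := by
              intro z
              rw [hfdef]
              simp only
              rw [Real.exp_add, ENNReal.ofReal_mul (Real.exp_nonneg _)]
            simp only [this]
            rw [lintegral_const_mul _ (by fun_prop), lintegral_exp_mul_std_gaussian,
              ← ENNReal.ofReal_mul (Real.exp_nonneg _), ← Real.exp_add]
        _ ≤ ∫⁻ v, ENNReal.ofReal
              (Real.exp (∑ i ∈ Finset.range n, cirTerm k θ ξ y₀ δt ε i (finExtend n v)))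
              ∂(Measure.map W ℙ) := by
            refine lintegral_mono fun v => ?_
            refine ENNReal.ofReal_le_ofReal (Real.exp_le_exp.mpr ?_)
            rw [hC, hA2]
            simp only
            have hy0 : (0:ℝ) ≤ max (Ψ n (finExtend n v)) 0 := le_max_right _ _
            have hsq : (ε * ξ * Real.sqrt (max (Ψ n (finExtend n v)) 0 * δt)) ^ 2
                = ε ^ 2 * ξ ^ 2 * (max (Ψ n (finExtend n v)) 0 * δt) := by
              rw [mul_pow, mul_pow, Real.sq_sqrt (mul_nonneg hy0 hδt0.le)]
            rw [hsq]
            nlinarith [mul_le_mul_of_nonneg_right hεk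
              (by positivity : (0:ℝ) ≤ ε * max (Ψ n (finExtend n v)) 0 * δt / 2)]
        _ = ∫⁻ ω, ENNReal.ofReal
              (Real.exp (∑ i ∈ Finset.range n, cirTerm k θ ξ y₀ δt ε i (finExtend n (W ω))))
              ∂ℙ :=
            lintegral_map (ENNReal.measurable_ofReal.comp (Real.measurable_exp.comp
              (Finset.measurable_sum _ fun i _ => hterm i))) hWmeas
        _ = ∫⁻ ω, ENNReal.ofReal
              (Real.exp (∑ i ∈ Finset.range n, cirTerm k θ ξ y₀ δt ε i (fun j => Z' j ω)))
              ∂ℙ := by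
            refine lintegral_congr fun ω => ?_
            refine congr_arg ENNReal.ofReal (congr_arg Real.exp
              (Finset.sum_congr rfl fun i hi => ?_))
            have hi' : i < n := Finset.mem_range.mp hi
            refine cirTerm_congr _ _ _ _ _ _ _ fun j hj => ?_
            rw [finExtend_lt (W ω) (lt_of_le_of_lt hj hi')]
        _ ≤ 1 := ihn
  -- transfer back to the original variables
  intro n hn
  have key := claim n hn
  refine le_trans (le_of_eq (lintegral_congr_ae ?_)) key
  filter_upwards [hYψ, hA] with ω h1 h2
  refine congr_arg ENNReal.ofReal (congr_arg Real.exp (Finset.sum_congr rfl fun i hi => ?_))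
  have hi' : i < n := Finset.mem_range.mp hi
  have hiN : i < N := lt_of_lt_of_le hi' hn
  rw [h1 i hiN.le, h2 i hiN]
  rfl
end

section
/- Let ω > 1 be a real number and define f_ω, g_ω : (1,∞) → ℝ by f_ω(x) = ω²x² and g_ω(x) = ω·x·(ω·x − 1)/(x − 1). Then f_ω is strictly increasing on (1,∞), g_ω attains its global minimum over (1,∞) at x* = 1 + √(1 − 1/ω) with g_ω(x*) = (ω + √((ω−1)·ω))², f_ω(x*) = g_ω(x*), and consequently inf_{x > 1} max{ f_ω(x), g_ω(x) } = (ω + √((ω−1)·ω))². -/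
/-- On `(1, ∞)`, `f_ω(x) = ω²x²` is strictly increasing, `g_ω(x) = ωx(ωx−1)/(x−1)`
attains its global minimum `(ω + √((ω−1)ω))²` at `x* = 1 + √(1 − 1/ω)`, the two
functions agree at `x*`, and `inf_{x>1} max{f_ω(x), g_ω(x)} = (ω + √((ω−1)ω))²`. -/
theorem stmt_15 (ω : ℝ) (hω : 1 < ω) (f g : ℝ → ℝ)
    (hf : ∀ x, f x = ω ^ 2 * x ^ 2)
    (hg : ∀ x, g x = ω * x * (ω * x - 1) / (x - 1))
    (xs : ℝ) (hxs : xs = 1 + Real.sqrt (1 - 1 / ω)) :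
    StrictMonoOn f (Set.Ioi 1) ∧
      xs ∈ Set.Ioi (1 : ℝ) ∧
      (∀ x ∈ Set.Ioi (1 : ℝ), g xs ≤ g x) ∧
      g xs = (ω + Real.sqrt ((ω - 1) * ω)) ^ 2 ∧
      f xs = g xs ∧
      IsGLB ((fun x => max (f x) (g x)) '' Set.Ioi 1) ((ω + Real.sqrt ((ω - 1) * ω)) ^ 2) := by
  have hω0 : (0:ℝ) < ω := by linarith
  set s := Real.sqrt (1 - 1/ω) with hsdef
  have hpos : (0:ℝ) < 1 - 1/ω := by
    have : 1/ω < 1 := by rw [div_lt_one hω0]; exact hω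
    linarith
  have hs0 : 0 < s := Real.sqrt_pos.2 hpos
  have hs2 : s^2 = 1 - 1/ω := Real.sq_sqrt hpos.le
  have hs2' : ω * s^2 = ω - 1 := by
    rw [hs2]; field_simp
  have hsq : Real.sqrt ((ω-1)*ω) = ω * s := by
    have h1 : (ω*s)^2 = (ω-1)*ω := by
      rw [mul_pow, hs2]; field_simp
    rw [← h1, Real.sqrt_sq (by positivity)]
  have hxs1 : xs = 1 + s := hxs
  -- g at xs equals M := (ω + ω*s)^2
  have hgxs : g xs = (ω + ω*s)^2 := by
    rw [hg, hxs1]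
    rw [show (1 + s - 1) = s by ring]
    rw [div_eq_iff (ne_of_gt hs0)]
    linear_combination (-(ω*(1+s))) * hs2'
  have hfxs : f xs = (ω + ω*s)^2 := by
    rw [hf, hxs1]; ring
  -- minimality of g
  have hgmin : ∀ x ∈ Set.Ioi (1:ℝ), (ω + ω*s)^2 ≤ g x := by
    intro x hx
    have hx1 : (1:ℝ) < x := hx
    rw [hg, le_div_iff₀ (by linarith)]
    have E : ω*x*(ω*x-1) - (ω+ω*s)^2*(x-1) = ω^2*(x-(1+s))^2 := by
      linear_combination (-(ω*x)) * hs2'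
    nlinarith [sq_nonneg (x - (1+s)), sq_nonneg ω]
  refine ⟨?_, ?_, ?_, ?_, ?_, ?_⟩
  · intro x hx y hy hxy
    rw [hf, hf]
    have hx1 : (1:ℝ) < x := hx
    have hx0 : (0:ℝ) ≤ x := by linarith
    have : (0:ℝ) < ω^2 := by positivity
    gcongr
  · rw [hxs1]; exact Set.mem_Ioi.2 (by linarith)
  · intro x hx
    rw [hgxs]
    exact (hgmin x hx)
  · rw [hgxs, hsq]
  · rw [hfxs, hgxs]
  · rw [hsq]
    apply IsLeast.isGLB
    constructor
    · exact ⟨xs, Set.mem_Ioi.2 (by rw [hxs1]; linarith), by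
        simp only [hfxs, hgxs, max_self]⟩
    · rintro y ⟨x, hx, rfl⟩
      exact le_trans (hgmin x hx) (le_max_right _ _)
end

section
/- Let k and ζ be real numbers with 0 < k and ζ ≥ 2k. Then (2/√(ζ² − k²))·( π/2 + arctan( k/√(ζ² − k²) ) ) > 1/(ζ − k). -/
/-- For `0 < k` and `ζ ≥ 2k`, the critical time of Proposition 3.4.3 exceeds `1/(ζ−k)`. -/
theorem stmt_16 (k ζ : ℝ) (hk : 0 < k) (hζ : 2 * k ≤ ζ) :
    1 / (ζ - k) <
      2 / Real.sqrt (ζ ^ 2 - k ^ 2) *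
        (Real.pi / 2 + Real.arctan (k / Real.sqrt (ζ ^ 2 - k ^ 2))) := by
  have h1 : 0 < ζ - k := by linarith
  have hsq : 0 < ζ ^ 2 - k ^ 2 := by nlinarith
  set s := Real.sqrt (ζ ^ 2 - k ^ 2) with hsdef
  have hs : 0 < s := Real.sqrt_pos.mpr hsq
  have hpi := Real.pi_gt_three
  have hslt : s < Real.pi * (ζ - k) := by
    rw [hsdef, show Real.pi * (ζ - k) = Real.sqrt ((Real.pi * (ζ - k)) ^ 2) by
      rw [Real.sqrt_sq (by positivity)]]
    apply Real.sqrt_lt_sqrt hsq.le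
    have h9 : 9 < Real.pi ^ 2 := by nlinarith
    nlinarith [mul_lt_mul_of_pos_right h9 (mul_pos h1 h1), mul_pos h1 hk]
  have key : 1 / (ζ - k) < 2 / s * (Real.pi / 2) := by
    rw [div_mul_eq_mul_div, div_lt_div_iff₀ h1 hs]
    nlinarith
  have harc : 0 ≤ Real.arctan (k / s) := by
    have h := Real.arctan_strictMono (show (0:ℝ) < k / s by positivity)
    rw [Real.arctan_zero] at h
    exact h.le
  nlinarith [div_pos (by norm_num : (0:ℝ) < 2) hs]
end

section
/- Let k and ζ be real numbers with 0 < k < ζ < 2k. Then (2/√(ζ² − k²))·( π/2 + arctan( k/√(ζ² − k²) ) ) > 4k/ζ². -/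
/-- For `0 < k < ζ < 2k`, the critical time of Proposition 3.4.3 exceeds `4k/ζ²`. -/
theorem stmt_17 (k ζ : ℝ) (hk : 0 < k) (hkζ : k < ζ) (hζ : ζ < 2 * k) :
    4 * k / ζ ^ 2 <
      2 / Real.sqrt (ζ ^ 2 - k ^ 2) *
        (Real.pi / 2 + Real.arctan (k / Real.sqrt (ζ ^ 2 - k ^ 2))) := by
  set s := Real.sqrt (ζ ^ 2 - k ^ 2) with hs
  have hpos : (0:ℝ) < ζ ^ 2 - k ^ 2 := by nlinarith
  have hspos : 0 < s := Real.sqrt_pos.mpr hpos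
  have hs2 : s ^ 2 = ζ ^ 2 - k ^ 2 := Real.sq_sqrt hpos.le
  have hsqrt3 : (0:ℝ) < Real.sqrt 3 := by positivity
  have h3 : Real.sqrt 3 ^ 2 = 3 := Real.sq_sqrt (by norm_num)
  -- s ≤ √3 * k
  have hsle : s ≤ Real.sqrt 3 * k := by
    have : s ≤ Real.sqrt (3 * k ^ 2) := Real.sqrt_le_sqrt (by nlinarith)
    rwa [show (3:ℝ) * k ^ 2 = (Real.sqrt 3 * k) ^ 2 by nlinarith,
      Real.sqrt_sq (by positivity)] at this
  -- 1/√3 ≤ k/s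
  have hdiv : 1 / Real.sqrt 3 ≤ k / s := by
    rw [div_le_div_iff₀ hsqrt3 hspos]
    nlinarith
  have harct : Real.pi / 6 ≤ Real.arctan (k / s) := by
    have : Real.arctan (1 / Real.sqrt 3) = Real.pi / 6 := by
      rw [← Real.tan_pi_div_six, Real.arctan_tan] <;> nlinarith [Real.pi_pos]
    calc Real.pi / 6 = Real.arctan (1 / Real.sqrt 3) := this.symm
      _ ≤ Real.arctan (k / s) := Real.arctan_strictMono.monotone hdiv
  have hks : k * s ≤ ζ ^ 2 / 2 := by nlinarith [sq_nonneg (ζ ^ 2 / 2 - k ^ 2)]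
  have hpi : (3:ℝ) < Real.pi := Real.pi_gt_three
  calc 4 * k / ζ ^ 2 < 4 * Real.pi / (3 * s) := by
        rw [div_lt_div_iff₀ (by nlinarith) (by nlinarith)]
        nlinarith [sq_nonneg ζ]
    _ = 2 / s * (Real.pi / 2 + Real.pi / 6) := by field_simp; ring
    _ ≤ 2 / s * (Real.pi / 2 + Real.arctan (k / s)) := by
        apply mul_le_mul_of_nonneg_left (by linarith) (by positivity)
end
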